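/- arXiv:1607.01229 — 8 statements merged into one kernel-verified Lean document; each statement's English description precedes it below -/
import Mathlib

section
/- With u_1 = 2 and u_{i+1} = u_i(u_i - 1) + 1, the series h_∞ = Σ_{i=1}^∞ 1/(u_i - 1) converges and satisfies h_∞ < 1.69104. -/
/-- The sequence u_1 = 2, u_{i+1} = u_i(u_i - 1) + 1 (indexed from 0 here,
so `uSeq 0 = 2, uSeq 1 = 3, uSeq 2 = 7, ...`). -/
def uSeq : ℕ → ℕ
  | 0 => 2
  | n + 1 => uSeq n * (uSeq n - 1) + 1

lemma uSeq_ge_two : ∀ n, 2 ≤ uSeq n := by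
  intro n
  induction n with
  | zero => simp [uSeq]
  | succ n ih =>
    have : 1 ≤ uSeq n - 1 := by omega
    have := Nat.mul_le_mul ih this
    simp only [uSeq]
    omega

lemma uSeq_pow : ∀ n, 2 ^ n ≤ uSeq n - 1 := by
  intro n
  induction n with
  | zero => simp [uSeq]
  | succ n ih =>
    have h2 := uSeq_ge_two n
    have : uSeq (n + 1) - 1 = uSeq n * (uSeq n - 1) := by simp [uSeq]
    rw [this, pow_succ, mul_comm (2 ^ n) 2]
    exact Nat.mul_le_mul h2 ih

lemma uSeq_five : uSeq 5 = 3263443 := by norm_num [uSeq]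

lemma uSeq_pow5 : ∀ i, 3263442 * 2 ^ i ≤ uSeq (i + 5) - 1 := by
  intro i
  induction i with
  | zero => simp [uSeq_five]
  | succ i ih =>
    have h2 := uSeq_ge_two (i + 5)
    have : uSeq (i + 1 + 5) - 1 = uSeq (i + 5) * (uSeq (i + 5) - 1) := by
      show uSeq ((i + 5) + 1) - 1 = _
      simp [uSeq]
    rw [this, pow_succ, ← mul_assoc, mul_comm (3263442 * 2 ^ i) 2]
    exact Nat.mul_le_mul h2 ih

lemma uSeq_real (n : ℕ) : ((uSeq n : ℝ) - 1) = ((uSeq n - 1 : ℕ) : ℝ) := by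
  have := uSeq_ge_two n
  push_cast [Nat.cast_sub (by omega : 1 ≤ uSeq n)]
  ring

lemma uSeq_real_pow (n : ℕ) : (2 : ℝ) ^ n ≤ (uSeq n : ℝ) - 1 := by
  rw [uSeq_real]
  exact_mod_cast uSeq_pow n

lemma uSeq_real_pos (n : ℕ) : (0 : ℝ) < (uSeq n : ℝ) - 1 :=
  lt_of_lt_of_le (by positivity) (uSeq_real_pow n)

/-- The series h_∞ = Σ_{i≥1} 1/(u_i - 1) converges and h_∞ < 1.69104. -/
theorem stmt0 :
    Summable (fun i : ℕ => (1 : ℝ) / ((uSeq i : ℝ) - 1)) ∧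
    (∑' i : ℕ, (1 : ℝ) / ((uSeq i : ℝ) - 1)) < 1.69104 := by
  set f : ℕ → ℝ := fun i => (1 : ℝ) / ((uSeq i : ℝ) - 1) with hf
  have hnn : ∀ i, 0 ≤ f i := fun i => le_of_lt (by
    simpa [hf] using one_div_pos.mpr (uSeq_real_pos i))
  have hle : ∀ i, f i ≤ (1 / 2 : ℝ) ^ i := by
    intro i
    have h1 := uSeq_real_pow i
    have h2 : (0 : ℝ) < 2 ^ i := by positivity
    calc f i ≤ 1 / (2 : ℝ) ^ i := one_div_le_one_div_of_le h2 h1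
      _ = (1 / 2 : ℝ) ^ i := by rw [div_pow, one_pow]
  have hsum : Summable f :=
    Summable.of_nonneg_of_le hnn hle (summable_geometric_of_lt_one (by norm_num) (by norm_num))
  refine ⟨hsum, ?_⟩
  have htail_sum : Summable (fun i => f (i + 5)) := (summable_nat_add_iff 5).mpr hsum
  have hsplit := Summable.sum_add_tsum_nat_add 5 hsum (f := f)
  rw [← hsplit]
  have hS : ∑ i ∈ Finset.range 5, f i = 1 + 1/2 + 1/6 + 1/42 + 1/1806 := by
    simp [hf, Finset.sum_range_succ, uSeq]
    norm_num
  have htail_le : ∀ i, f (i + 5) ≤ (1 / 3263442 : ℝ) * (1 / 2) ^ i := by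
    intro i
    have h1 : (3263442 : ℝ) * 2 ^ i ≤ (uSeq (i + 5) : ℝ) - 1 := by
      rw [uSeq_real]
      exact_mod_cast uSeq_pow5 i
    have h2 : (0 : ℝ) < 3263442 * 2 ^ i := by positivity
    calc f (i + 5) ≤ 1 / ((3263442 : ℝ) * 2 ^ i) := one_div_le_one_div_of_le h2 h1
      _ = (1 / 3263442 : ℝ) * (1 / 2) ^ i := by
        rw [div_pow, one_pow]
        field_simp
  have hgeo : Summable (fun i : ℕ => (1 / 3263442 : ℝ) * (1 / 2) ^ i) :=
    (summable_geometric_of_lt_one (by norm_num) (by norm_num)).mul_left _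
  have htail : (∑' i, f (i + 5)) ≤ (1 / 3263442 : ℝ) * 2 := by
    calc (∑' i, f (i + 5)) ≤ ∑' i : ℕ, (1 / 3263442 : ℝ) * (1 / 2) ^ i :=
          Summable.tsum_le_tsum htail_le htail_sum hgeo
      _ = (1 / 3263442 : ℝ) * (1 - 1/2)⁻¹ := by
          rw [tsum_mul_left, tsum_geometric_of_lt_one (by norm_num) (by norm_num)]
      _ = (1 / 3263442 : ℝ) * 2 := by norm_num
  rw [hS]
  nlinarith [htail]
end

section
/- With λ_1 = 1, λ_2 = 16, λ_3 = 25, λ_4 = 100, λ_5 = 400, λ_6 = 400, λ_7 = 1600, λ_8 = 6400, λ_9 = 6400, λ_10 = 25600 (up to a common positive scaling factor), and sizes s = (1/420−ε, (1/105)(1+ε), (1/84)(1+ε), (1/42)(1+ε), (1/21)(1+ε), (1/20)(1+ε), (1/10)(1+ε), (1/5)(1+ε), (1/4)(1+ε), (1/2)(1+ε)) for sufficiently small ε > 0, the following dominance relations hold: 4²s_1 ≻ s_2, 5²s_1 ≻ s_3, 2²s_3 ≻ s_4, 2²s_4 ≻ s_5, s_5 ≻ s_6, 2²s_6 ≻ s_7,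 2²s_7 ≻ s_8, s_8 ≻ s_9, 2²s_9 ≻ s_10. -/
/-- `m²` items of side `si` (weight `li`) dominate an item of side `sj`
(weight `lj`): `m·si ≤ sj` and `m²·λ_i ≥ λ_j`. -/
def Dominates (m : ℕ) (si sj li lj : ℝ) : Prop :=
  (m : ℝ) * si ≤ sj ∧ (m : ℝ) ^ 2 * li ≥ lj

/-- The nine dominance relations used for the 1.680783 square-packing lower bound. -/
theorem stmt3 :
    ∃ ε₀ > (0 : ℝ), ∀ ε : ℝ, 0 < ε → ε < ε₀ →
      Dominates 4 (1/420 - ε) ((1/105) * (1+ε)) 1 16 ∧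
      Dominates 5 (1/420 - ε) ((1/84) * (1+ε)) 1 25 ∧
      Dominates 2 ((1/84) * (1+ε)) ((1/42) * (1+ε)) 25 100 ∧
      Dominates 2 ((1/42) * (1+ε)) ((1/21) * (1+ε)) 100 400 ∧
      Dominates 1 ((1/21) * (1+ε)) ((1/20) * (1+ε)) 400 400 ∧
      Dominates 2 ((1/20) * (1+ε)) ((1/10) * (1+ε)) 400 1600 ∧
      Dominates 2 ((1/10) * (1+ε)) ((1/5) * (1+ε)) 1600 6400 ∧
      Dominates 1 ((1/5) * (1+ε)) ((1/4) * (1+ε)) 6400 6400 ∧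
      Dominates 2 ((1/4) * (1+ε)) ((1/2) * (1+ε)) 6400 25600 := by
  refine ⟨1, by norm_num, fun ε hε hε' => ?_⟩
  simp only [Dominates]
  norm_num
  refine ⟨?_,?_,?_,?_,?_,?_,?_,?_,?_⟩ <;> linarith
end

section
/- In any packing of axis-parallel rectangles of width 1/4 − 300δ, height 1/6 − 2ε ('type 1') and width 1/4 + 100δ, height 1/6 − 2ε ('type 2') into the unit square, where δ, ε > 0 are sufficiently small, one cannot pack more than 24 type-1 items, and one cannot pack 12 type-1 items together with more than 12 type-2 items; moreover the patterns (24 type-1) and (12 type-1, 12 type-2) are both feasible. -/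
/-- `RPack w h pos`: the axis-parallel rectangles with widths `w i` and heights
`h i`, placed with lower-left corners `pos i`, lie inside the unit square and
have pairwise disjoint interiors. -/
def RPack {ι : Type*} (w h : ι → ℝ) (pos : ι → ℝ × ℝ) : Prop :=
  (∀ i, 0 ≤ (pos i).1 ∧ (pos i).1 + w i ≤ 1 ∧
        0 ≤ (pos i).2 ∧ (pos i).2 + h i ≤ 1) ∧
  (∀ i j, i ≠ j →
    (pos i).1 + w i ≤ (pos j).1 ∨ (pos j).1 + w j ≤ (pos i).1 ∨
    (pos i).2 + h i ≤ (pos j).2 ∨ (pos j).2 + h j ≤ (pos i).2)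

open MeasureTheory Set

lemma ioo_disj {a b c d : ℝ} (H : b ≤ c) : Disjoint (Ioo a b) (Ioo c d) := by
  rw [Set.disjoint_left]
  rintro x ⟨_, h2⟩ ⟨h3, _⟩
  linarith

lemma rpack_area {n : ℕ} (w h : Fin n → ℝ) (pos : Fin n → ℝ × ℝ)
    (hw : ∀ i, 0 ≤ w i) (hh : ∀ i, 0 ≤ h i) (hp : RPack w h pos) :
    ∑ i, w i * h i ≤ 1 := by
  obtain ⟨hin, hd⟩ := hp
  set S : Fin n → Set (ℝ × ℝ) := fun i =>
    Ioo (pos i).1 ((pos i).1 + w i) ×ˢ Ioo (pos i).2 ((pos i).2 + h i) with hS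
  have hmeas : ∀ i, MeasurableSet (S i) := fun i =>
    measurableSet_Ioo.prod measurableSet_Ioo
  have hdisj : Pairwise (Function.onFun Disjoint S) := by
    intro i j hij
    have hprod : ∀ (s s' t t' : Set ℝ), Disjoint s s' ∨ Disjoint t t' →
        Disjoint (s ×ˢ t) (s' ×ˢ t') := by
      intro s s' t t' H
      rw [Set.disjoint_left]
      rintro ⟨x, y⟩ ⟨h1, h2⟩ ⟨h3, h4⟩
      rcases H with H | H
      · exact Set.disjoint_left.1 H h1 h3
      · exact Set.disjoint_left.1 H h2 h4
    rcases hd i j hij with H | H | H | H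
    · exact hprod _ _ _ _ (Or.inl (ioo_disj H))
    · exact hprod _ _ _ _ (Or.inl (ioo_disj H).symm)
    · exact hprod _ _ _ _ (Or.inr (ioo_disj H))
    · exact hprod _ _ _ _ (Or.inr (ioo_disj H).symm)
  have hvol : ∀ i, volume (S i) = ENNReal.ofReal (w i * h i) := by
    intro i
    rw [hS]
    rw [Measure.volume_eq_prod, Measure.prod_prod, Real.volume_Ioo, Real.volume_Ioo,
      add_sub_cancel_left, add_sub_cancel_left, ← ENNReal.ofReal_mul (hw i)]
  have hsub : (⋃ i, S i) ⊆ Icc (0:ℝ) 1 ×ˢ Icc (0:ℝ) 1 := by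
    apply Set.iUnion_subset
    intro i
    apply Set.prod_mono
    · exact Set.Ioo_subset_Icc_self.trans (Set.Icc_subset_Icc (hin i).1 (hin i).2.1)
    · exact Set.Ioo_subset_Icc_self.trans (Set.Icc_subset_Icc (hin i).2.2.1 (hin i).2.2.2)
  have key : ENNReal.ofReal (∑ i, w i * h i) ≤ 1 := by
    calc ENNReal.ofReal (∑ i, w i * h i)
        = ∑ i, ENNReal.ofReal (w i * h i) :=
          ENNReal.ofReal_sum_of_nonneg (fun i _ => mul_nonneg (hw i) (hh i))
      _ = ∑' i, volume (S i) := by rw [tsum_fintype]; exact Finset.sum_congr rfl fun i _ => (hvol i).symm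
      _ = volume (⋃ i, S i) := (measure_iUnion hdisj hmeas).symm
      _ ≤ volume (Icc (0:ℝ) 1 ×ˢ Icc (0:ℝ) 1) := measure_mono hsub
      _ = 1 := by
          rw [Measure.volume_eq_prod, Measure.prod_prod, Real.volume_Icc]
          norm_num
  exact ENNReal.ofReal_le_one.1 key

lemma sum_split (a b : ℕ) (p q : ℝ) :
    ∑ i : Fin (a + b), (if (i : ℕ) < a then p else q) = a * p + b * q := by
  rw [Fin.sum_univ_eq_sum_range (fun k => if k < a then p else q)]
  rw [Finset.sum_ite]
  have h1 : (Finset.range (a+b)).filter (fun k => k < a) = Finset.range a := by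
    ext k; simp; omega
  have h2 : (Finset.range (a+b)).filter (fun k => ¬ k < a) = Finset.Ico a (a+b) := by
    ext k; simp; omega
  rw [h1, h2, Finset.sum_const, Finset.sum_const, Finset.card_range, Nat.card_Ico]
  simp [mul_comm]


set_option maxHeartbeats 1000000 in
/-- Packing facts for type-1 (width 1/4−300δ) and type-2 (width 1/4+100δ)
rectangles of height 1/6−2ε: at most 24 type-1 items; with 12 type-1 items at
most 12 type-2 items; and the patterns (24 type-1) and (12 type-1, 12 type-2)
are feasible. -/
theorem stmt6 :
    ∃ δ₀ > (0 : ℝ), ∃ ε₀ > (0 : ℝ), ∀ δ ε : ℝ, 0 < δ → δ < δ₀ → 0 < ε → ε < ε₀ →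
      (∀ a b : ℕ, ∀ pos : Fin (a + b) → ℝ × ℝ,
        RPack (fun i : Fin (a + b) => if (i : ℕ) < a then 1/4 - 300*δ else 1/4 + 100*δ)
          (fun _ => 1/6 - 2*ε) pos → a ≤ 24) ∧
      (∀ a b : ℕ, ∀ pos : Fin (a + b) → ℝ × ℝ,
        RPack (fun i : Fin (a + b) => if (i : ℕ) < a then 1/4 - 300*δ else 1/4 + 100*δ)
          (fun _ => 1/6 - 2*ε) pos → 12 ≤ a → b ≤ 12) ∧
      (∃ pos : Fin (24 + 0) → ℝ × ℝ,
        RPack (fun i : Fin (24 + 0) => if (i : ℕ) < 24 then 1/4 - 300*δ else 1/4 + 100*δ)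
          (fun _ => 1/6 - 2*ε) pos) ∧
      (∃ pos : Fin (12 + 12) → ℝ × ℝ,
        RPack (fun i : Fin (12 + 12) => if (i : ℕ) < 12 then 1/4 - 300*δ else 1/4 + 100*δ)
          (fun _ => 1/6 - 2*ε) pos) := by
  refine ⟨1/1000000, by norm_num, 1/1000000, by norm_num, fun δ ε hδ hδ' hε hε' => ?_⟩
  have hw1 : (0:ℝ) ≤ 1/4 - 300*δ := by linarith
  have hw2 : (0:ℝ) ≤ 1/4 + 100*δ := by linarith
  have hhh : (0:ℝ) ≤ 1/6 - 2*ε := by linarith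
  have harea : ∀ a b : ℕ, ∀ pos : Fin (a + b) → ℝ × ℝ,
      RPack (fun i : Fin (a + b) => if (i : ℕ) < a then 1/4 - 300*δ else 1/4 + 100*δ)
        (fun _ => 1/6 - 2*ε) pos →
      ((a:ℝ) * (1/4 - 300*δ) + (b:ℝ) * (1/4 + 100*δ)) * (1/6 - 2*ε) ≤ 1 := by
    intro a b pos hp
    have h := rpack_area _ _ pos (fun i => by split <;> linarith)
      (fun i => hhh) hp
    rw [← Finset.sum_mul, sum_split] at h
    exact h
  refine ⟨?_, ?_, ?_, ?_⟩
  · -- at most 24 type-1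
    intro a b pos hp
    by_contra hcon
    push_neg at hcon
    have h := harea a b pos hp
    have ha : (25:ℝ) ≤ a := by exact_mod_cast hcon
    have hb : (0:ℝ) ≤ b := Nat.cast_nonneg b
    nlinarith [mul_nonneg (mul_nonneg hb hw2) hhh,
      mul_nonneg (mul_nonneg (by linarith : (0:ℝ) ≤ (a:ℝ) - 25) hw1) hhh,
      mul_pos hδ hε]
  · -- with 12 type-1, at most 12 type-2
    intro a b pos hp ha12
    by_contra hcon
    push_neg at hcon
    have h := harea a b pos hp
    have ha : (12:ℝ) ≤ a := by exact_mod_cast ha12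
    have hb : (13:ℝ) ≤ b := by exact_mod_cast hcon
    nlinarith [mul_nonneg (mul_nonneg (by linarith : (0:ℝ) ≤ (b:ℝ) - 13) hw2) hhh,
      mul_nonneg (mul_nonneg (by linarith : (0:ℝ) ≤ (a:ℝ) - 12) hw1) hhh,
      mul_pos hδ hε]
  · -- 24 type-1 feasible
    refine ⟨fun i => ((((i:ℕ) % 4 : ℕ) : ℝ) * (1/4), (((i:ℕ) / 4 : ℕ) : ℝ) * (1/6)), ?_, ?_⟩
    · intro i
      have h24 : (i:ℕ) < 24 := i.isLt
      have hc : ((i:ℕ) % 4 : ℕ) ≤ 3 := by omega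
      have hr : ((i:ℕ) / 4 : ℕ) ≤ 5 := by omega
      have hc' : (((i:ℕ) % 4 : ℕ) : ℝ) ≤ 3 := by exact_mod_cast hc
      have hr' : (((i:ℕ) / 4 : ℕ) : ℝ) ≤ 5 := by exact_mod_cast hr
      have hc0 : (0:ℝ) ≤ (((i:ℕ) % 4 : ℕ) : ℝ) := Nat.cast_nonneg _
      have hr0 : (0:ℝ) ≤ (((i:ℕ) / 4 : ℕ) : ℝ) := Nat.cast_nonneg _
      simp only [if_pos h24]
      refine ⟨by positivity, by linarith, by positivity, by linarith⟩
    · intro i j hij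
      have h24i : (i:ℕ) < 24 := i.isLt
      have h24j : (j:ℕ) < 24 := j.isLt
      have hv : (i:ℕ) ≠ (j:ℕ) := fun H => hij (Fin.ext H)
      simp only [if_pos h24i, if_pos h24j]
      rcases lt_trichotomy ((i:ℕ) / 4) ((j:ℕ) / 4) with h | h | h
      · right; right; left
        have : (((i:ℕ) / 4 : ℕ) : ℝ) + 1 ≤ (((j:ℕ) / 4 : ℕ) : ℝ) := by exact_mod_cast h
        linarith
      · have hcc : (i:ℕ) % 4 ≠ (j:ℕ) % 4 := by omega
        rcases lt_or_gt_of_ne hcc with hc | hc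
        · left
          have : (((i:ℕ) % 4 : ℕ) : ℝ) + 1 ≤ (((j:ℕ) % 4 : ℕ) : ℝ) := by exact_mod_cast hc
          linarith
        · right; left
          have : (((j:ℕ) % 4 : ℕ) : ℝ) + 1 ≤ (((i:ℕ) % 4 : ℕ) : ℝ) := by exact_mod_cast hc
          linarith
      · right; right; right
        have : (((j:ℕ) / 4 : ℕ) : ℝ) + 1 ≤ (((i:ℕ) / 4 : ℕ) : ℝ) := by exact_mod_cast h
        linarith
  · -- 12 type-1 + 12 type-2 feasible
    refine ⟨fun i =>
      (if (i:ℕ) < 12 then (((i:ℕ) % 2 : ℕ) : ℝ) * (1/4 - 300*δ)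
        else (1/2 - 600*δ) + (((i:ℕ) % 2 : ℕ) : ℝ) * (1/4 + 100*δ),
       ((((i:ℕ) % 12) / 2 : ℕ) : ℝ) * (1/6)), ?_, ?_⟩
    · intro i
      have h24 : (i:ℕ) < 24 := i.isLt
      have hc : ((i:ℕ) % 2 : ℕ) ≤ 1 := by omega
      have hr : (((i:ℕ) % 12) / 2 : ℕ) ≤ 5 := by omega
      have hc' : (((i:ℕ) % 2 : ℕ) : ℝ) ≤ 1 := by exact_mod_cast hc
      have hr' : ((((i:ℕ) % 12) / 2 : ℕ) : ℝ) ≤ 5 := by exact_mod_cast hr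
      have hc0 : (0:ℝ) ≤ (((i:ℕ) % 2 : ℕ) : ℝ) := Nat.cast_nonneg _
      have hr0 : (0:ℝ) ≤ ((((i:ℕ) % 12) / 2 : ℕ) : ℝ) := Nat.cast_nonneg _
      beta_reduce
      by_cases h12 : (i:ℕ) < 12
      · simp only [if_pos h12]
        refine ⟨by positivity, by nlinarith, by positivity, by linarith⟩
      · simp only [if_neg h12]
        refine ⟨by nlinarith, by nlinarith, by positivity, by linarith⟩
    · intro i j hij
      have h24i : (i:ℕ) < 24 := i.isLt
      have h24j : (j:ℕ) < 24 := j.isLt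
      have hv : (i:ℕ) ≠ (j:ℕ) := fun H => hij (Fin.ext H)
      have hci : ((i:ℕ) % 2 : ℕ) ≤ 1 := by omega
      have hcj : ((j:ℕ) % 2 : ℕ) ≤ 1 := by omega
      have hci' : (((i:ℕ) % 2 : ℕ) : ℝ) ≤ 1 := by exact_mod_cast hci
      have hcj' : (((j:ℕ) % 2 : ℕ) : ℝ) ≤ 1 := by exact_mod_cast hcj
      have hci0 : (0:ℝ) ≤ (((i:ℕ) % 2 : ℕ) : ℝ) := Nat.cast_nonneg _
      have hcj0 : (0:ℝ) ≤ (((j:ℕ) % 2 : ℕ) : ℝ) := Nat.cast_nonneg _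
      beta_reduce
      rcases lt_trichotomy (((i:ℕ) % 12) / 2) (((j:ℕ) % 12) / 2) with h | h | h
      · right; right; left
        have : ((((i:ℕ) % 12) / 2 : ℕ) : ℝ) + 1 ≤ ((((j:ℕ) % 12) / 2 : ℕ) : ℝ) := by
          exact_mod_cast h
        linarith
      · by_cases hi12 : (i:ℕ) < 12 <;> by_cases hj12 : (j:ℕ) < 12
        · have hcc : (i:ℕ) % 2 ≠ (j:ℕ) % 2 := by omega
          simp only [if_pos hi12, if_pos hj12]
          rcases lt_or_gt_of_ne hcc with hc | hc
          · left
            have : (((i:ℕ) % 2 : ℕ) : ℝ) + 1 ≤ (((j:ℕ) % 2 : ℕ) : ℝ) := by exact_mod_cast hc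
            nlinarith
          · right; left
            have : (((j:ℕ) % 2 : ℕ) : ℝ) + 1 ≤ (((i:ℕ) % 2 : ℕ) : ℝ) := by exact_mod_cast hc
            nlinarith
        · left
          simp only [if_pos hi12, if_neg hj12]
          nlinarith
        · right; left
          simp only [if_pos hj12, if_neg hi12]
          nlinarith
        · have hcc : (i:ℕ) % 2 ≠ (j:ℕ) % 2 := by omega
          simp only [if_neg hi12, if_neg hj12]
          rcases lt_or_gt_of_ne hcc with hc | hc
          · left
            have : (((i:ℕ) % 2 : ℕ) : ℝ) + 1 ≤ (((j:ℕ) % 2 : ℕ) : ℝ) := by exact_mod_cast hc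
            nlinarith
          · right; left
            have : (((j:ℕ) % 2 : ℕ) : ℝ) + 1 ≤ (((i:ℕ) % 2 : ℕ) : ℝ) := by exact_mod_cast hc
            nlinarith
      · right; right; right
        have : ((((j:ℕ) % 12) / 2 : ℕ) : ℝ) + 1 ≤ ((((i:ℕ) % 12) / 2 : ℕ) : ℝ) := by
          exact_mod_cast h
        linarith
end

section
/- Let δ > 0 be sufficiently small, and consider axis-parallel rectangles of type 2 (width 1/4 + 100δ, height 1/6 − 2ε) and type 4 (width 1/4 − 30δ, height 1/3 + ε) in the unit square. Assign weights λ_2 = 48/413 and λ_4 = 72/413. Then the maximum total weight of any non-overlapping packing of such rectangles in the unit square is 864/413, attained by the patterns (18 type-2), (6 type-2, 8 type-4), and (12 type-2, 4 type-4). -/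
open MeasureTheory



lemma sum_widths_le {ι : Type*} [DecidableEq ι] (S : Finset ι) (x w : ι → ℝ)
    (hw : ∀ i ∈ S, 0 < w i)
    (hc : ∀ i ∈ S, 0 ≤ x i ∧ x i + w i ≤ 1)
    (hsep : ∀ i ∈ S, ∀ j ∈ S, i ≠ j → x i + w i ≤ x j ∨ x j + w j ≤ x i) :
    ∑ i ∈ S, w i ≤ 1 := by
  have hd : (S : Set ι).PairwiseDisjoint (fun i => Set.Ioo (x i) (x i + w i)) := by
    intro i hi j hj hij
    simp only [Function.onFun, Set.disjoint_left]
    rintro y ⟨h1, h2⟩ ⟨h3, h4⟩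
    rcases hsep i hi j hj hij with h | h <;> linarith
  have hU : volume (⋃ i ∈ S, Set.Ioo (x i) (x i + w i)) = ∑ i ∈ S, volume (Set.Ioo (x i) (x i + w i)) :=
    measure_biUnion_finset hd (fun i _ => measurableSet_Ioo)
  have hsub : (⋃ i ∈ S, Set.Ioo (x i) (x i + w i)) ⊆ Set.Icc (0:ℝ) 1 := by
    intro y hy
    simp only [Set.mem_iUnion] at hy
    obtain ⟨i, hi, hyi⟩ := hy
    exact ⟨le_trans (hc i hi).1 hyi.1.le, le_trans hyi.2.le (hc i hi).2⟩
  have h1 : (∑ i ∈ S, volume (Set.Ioo (x i) (x i + w i))) ≤ 1 := by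
    rw [← hU]
    calc volume (⋃ i ∈ S, Set.Ioo (x i) (x i + w i)) ≤ volume (Set.Icc (0:ℝ) 1) :=
          measure_mono hsub
      _ = 1 := by simp
  have h2 : ∀ i ∈ S, volume (Set.Ioo (x i) (x i + w i)) = ENNReal.ofReal (w i) := by
    intro i hi; rw [Real.volume_Ioo]; ring_nf
  rw [Finset.sum_congr rfl h2] at h1
  rw [← ENNReal.ofReal_sum_of_nonneg (fun i hi => (hw i hi).le)] at h1
  have := (ENNReal.ofReal_le_one).mp h1
  linarith

lemma count36 (δ : ℝ) (hδ : 0 < δ) (hδ' : δ < 1/600) (n2 n4 : ℕ)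
    (h : (n2:ℝ)*(1/4+100*δ) + (n4:ℝ)*(1/4-30*δ) ≤ 1) : 12*(n2:ℝ) + 9*(n4:ℝ) ≤ 36 := by
  have hn2 : (0:ℝ) ≤ n2 := Nat.cast_nonneg _
  have hn4 : (0:ℝ) ≤ n4 := Nat.cast_nonneg _
  have h4 : n2 + n4 ≤ 4 := by
    by_contra hc
    push_neg at hc
    have h5 : (5:ℝ) ≤ (n2:ℝ) + n4 := by exact_mod_cast hc
    nlinarith [mul_nonneg hn2 hδ.le, mul_nonneg hn4 hδ.le]
  rcases Nat.eq_zero_or_pos n2 with h0 | h1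
  · subst h0
    have : (n4:ℝ) ≤ 4 := by exact_mod_cast (by omega : n4 ≤ 4)
    simp only [Nat.cast_zero]
    linarith
  · have h3 : n2 + n4 ≤ 3 := by
      by_contra hc
      push_neg at hc
      have he : n2 + n4 = 4 := le_antisymm h4 hc
      have he' : (n2:ℝ) + n4 = 4 := by exact_mod_cast he
      have h1' : (1:ℝ) ≤ n2 := by exact_mod_cast h1
      nlinarith [mul_nonneg (sub_nonneg.mpr h1') hδ.le]
    have : (n2:ℝ) + n4 ≤ 3 := by exact_mod_cast h3
    linarith

lemma upper (δ ε : ℝ) (hδ : 0 < δ) (hδ' : δ < 1/10000) (hε : 0 < ε) (hε' : ε < 1/10000)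
    (a b : ℕ) (pos : Fin (a+b) → ℝ × ℝ)
    (hp : RPack (fun i : Fin (a + b) => if (i : ℕ) < a then 1/4 + 100*δ else 1/4 - 30*δ)
          (fun i : Fin (a + b) => if (i : ℕ) < a then 1/6 - 2*ε else 1/3 + ε) pos) :
    ((48 : ℝ) * a + 72 * b) / 413 ≤ 864 / 413 := by
  obtain ⟨hin, hsep⟩ := hp
  set w : Fin (a+b) → ℝ := fun i => if (i : ℕ) < a then 1/4 + 100*δ else 1/4 - 30*δ with hw_def
  set h : Fin (a+b) → ℝ := fun i => if (i : ℕ) < a then 1/6 - 2*ε else 1/3 + ε with hh_def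
  set c : Fin (a+b) → ℝ := fun i => if (i : ℕ) < a then 12 else 9 with hc_def
  have hwpos : ∀ i, 0 < w i := by
    intro i; simp only [hw_def]; split <;> linarith
  have hhpos : ∀ i, 0 < h i := by
    intro i; simp only [hh_def]; split <;> linarith
  -- pointwise bound
  have key : ∀ y : ℝ, ∑ i ∈ Finset.univ.filter
      (fun i => (pos i).2 < y ∧ y < (pos i).2 + h i), c i ≤ 36 := by
    intro y
    set S := Finset.univ.filter (fun i : Fin (a+b) => (pos i).2 < y ∧ y < (pos i).2 + h i) with hS
    have hSmem : ∀ i ∈ S, (pos i).2 < y ∧ y < (pos i).2 + h i := by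
      intro i hi; exact (Finset.mem_filter.mp hi).2
    have hSw : ∑ i ∈ S, w i ≤ 1 := by
      refine sum_widths_le S (fun i => (pos i).1) w (fun i _ => hwpos i)
        (fun i _ => ⟨(hin i).1, (hin i).2.1⟩) ?_
      intro i hi j hj hij
      rcases hsep i j hij with hx | hx | hy | hy
      · exact Or.inl hx
      · exact Or.inr hx
      · exact absurd hy (by have := hSmem i hi; have := hSmem j hj; push_neg; linarith)
      · exact absurd hy (by have := hSmem i hi; have := hSmem j hj; push_neg; linarith)
    set S2 := S.filter (fun i : Fin (a+b) => (i : ℕ) < a) with hS2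
    set S4 := S.filter (fun i : Fin (a+b) => ¬ (i : ℕ) < a) with hS4
    have hw2 : ∑ i ∈ S2, w i = (S2.card : ℝ) * (1/4 + 100*δ) := by
      rw [Finset.sum_congr rfl (fun i hi => ?_), Finset.sum_const, nsmul_eq_mul]
      simp only [hw_def]; rw [if_pos (Finset.mem_filter.mp hi).2]
    have hw4 : ∑ i ∈ S4, w i = (S4.card : ℝ) * (1/4 - 30*δ) := by
      rw [Finset.sum_congr rfl (fun i hi => ?_), Finset.sum_const, nsmul_eq_mul]
      simp only [hw_def]; rw [if_neg (Finset.mem_filter.mp hi).2]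
    have hc2 : ∑ i ∈ S2, c i = (S2.card : ℝ) * 12 := by
      rw [Finset.sum_congr rfl (fun i hi => ?_), Finset.sum_const, nsmul_eq_mul]
      simp only [hc_def]; rw [if_pos (Finset.mem_filter.mp hi).2]
    have hc4 : ∑ i ∈ S4, c i = (S4.card : ℝ) * 9 := by
      rw [Finset.sum_congr rfl (fun i hi => ?_), Finset.sum_const, nsmul_eq_mul]
      simp only [hc_def]; rw [if_neg (Finset.mem_filter.mp hi).2]
    have hsplitw : ∑ i ∈ S, w i = ∑ i ∈ S2, w i + ∑ i ∈ S4, w i :=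
      (Finset.sum_filter_add_sum_filter_not S _ w).symm
    have hsplitc : ∑ i ∈ S, c i = ∑ i ∈ S2, c i + ∑ i ∈ S4, c i :=
      (Finset.sum_filter_add_sum_filter_not S _ c).symm
    have := count36 δ hδ (by linarith) S2.card S4.card (by
      rw [hsplitw, hw2, hw4] at hSw; linarith)
    rw [hsplitc, hc2, hc4]; linarith
  -- integral
  set F : ℝ → ℝ := fun y => ∑ i, Set.indicator (Set.Ioo (pos i).2 ((pos i).2 + h i))
      (fun _ => c i) y with hF
  have hFle : ∀ y, F y ≤ 36 := by
    intro y
    have : F y = ∑ i ∈ Finset.univ.filter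
        (fun i => (pos i).2 < y ∧ y < (pos i).2 + h i), c i := by
      rw [Finset.sum_filter]
      simp only [hF, Set.indicator_apply, Set.mem_Ioo]
    rw [this]; exact key y
  have hIntTerm : ∀ i : Fin (a+b), Integrable
      (Set.indicator (Set.Ioo (pos i).2 ((pos i).2 + h i)) (fun _ => c i))
      (volume.restrict (Set.Icc (0:ℝ) 1)) := by
    intro i
    refine ((integrable_indicator_iff measurableSet_Ioo).mpr ?_)
    refine (integrableOn_const_iff).mpr (Or.inr ?_)
    calc volume.restrict (Set.Icc (0:ℝ) 1) (Set.Ioo (pos i).2 ((pos i).2 + h i))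
        ≤ volume (Set.Ioo (pos i).2 ((pos i).2 + h i)) := Measure.restrict_apply_le _ _
      _ < ⊤ := by rw [Real.volume_Ioo]; exact ENNReal.ofReal_lt_top
  have hIntF : Integrable F (volume.restrict (Set.Icc (0:ℝ) 1)) := by
    exact integrable_finset_sum _ (fun i _ => hIntTerm i)
  have hval : ∫ y in Set.Icc (0:ℝ) 1, F y = ∑ i, c i * h i := by
    rw [integral_finset_sum _ (fun i _ => hIntTerm i)]
    refine Finset.sum_congr rfl (fun i _ => ?_)
    have hsub : Set.Ioo (pos i).2 ((pos i).2 + h i) ⊆ Set.Icc (0:ℝ) 1 := by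
      intro y hy
      exact ⟨le_trans (hin i).2.2.1 hy.1.le, le_trans hy.2.le (hin i).2.2.2⟩
    rw [MeasureTheory.setIntegral_indicator measurableSet_Ioo,
      Set.inter_eq_self_of_subset_right hsub, setIntegral_const, measureReal_def, Real.volume_Ioo]
    rw [smul_eq_mul, ENNReal.toReal_ofReal (by linarith [hhpos i])]
    ring
  have hbound : ∫ y in Set.Icc (0:ℝ) 1, F y ≤ 36 := by
    calc ∫ y in Set.Icc (0:ℝ) 1, F y ≤ ∫ _ in Set.Icc (0:ℝ) 1, (36:ℝ) := by
          refine setIntegral_mono_on hIntF ((integrableOn_const_iff).mpr (Or.inr ?_))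
            measurableSet_Icc (fun y _ => hFle y)
          rw [Real.volume_Icc]; exact ENNReal.ofReal_lt_top
      _ = 36 := by rw [setIntegral_const, measureReal_def, Real.volume_Icc, smul_eq_mul]; norm_num
  have hsum : ∑ i, c i * h i = (a:ℝ) * (12*(1/6 - 2*ε)) + (b:ℝ) * (9*(1/3 + ε)) := by
    have : ∀ i : Fin (a+b), c i * h i =
        (fun k : ℕ => if k < a then 12*(1/6 - 2*ε) else 9*(1/3 + ε)) (i : ℕ) := by
      intro i; simp only [hc_def, hh_def]; split <;> ring
    rw [Finset.sum_congr rfl (fun i _ => this i),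
      Fin.sum_univ_eq_sum_range (fun k : ℕ => if k < a then 12*(1/6 - 2*ε) else 9*(1/3 + ε)) (a+b)]
    rw [Finset.range_eq_Ico, ← Finset.sum_Ico_consecutive _ (Nat.zero_le a) (Nat.le_add_right a b)]
    have h1 : ∑ k ∈ Finset.Ico 0 a, (if k < a then 12*(1/6 - 2*ε) else 9*(1/3 + ε))
        = (a:ℝ) * (12*(1/6 - 2*ε)) := by
      rw [Finset.sum_congr rfl (fun k hk => if_pos (Finset.mem_Ico.mp hk).2),
        Finset.sum_const, nsmul_eq_mul, Nat.card_Ico, Nat.sub_zero]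
    have h2 : ∑ k ∈ Finset.Ico a (a+b), (if k < a then 12*(1/6 - 2*ε) else 9*(1/3 + ε))
        = (b:ℝ) * (9*(1/3 + ε)) := by
      rw [Finset.sum_congr rfl (fun k hk => if_neg (by
        have := (Finset.mem_Ico.mp hk).1; omega)),
        Finset.sum_const, nsmul_eq_mul, Nat.card_Ico, Nat.add_sub_cancel_left]
    rw [h1, h2]
  have hmain : (a:ℝ) * (12*(1/6 - 2*ε)) + (b:ℝ) * (9*(1/3 + ε)) ≤ 36 := by
    rw [← hsum, ← hval]; exact hbound
  -- from here pure arithmetic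
  have ha : (a:ℝ) ≤ 19 := by nlinarith [Nat.cast_nonneg (α := ℝ) a, Nat.cast_nonneg (α := ℝ) b]
  have h236 : 2*(a:ℝ) + 3*(b:ℝ) < 37 := by
    nlinarith [Nat.cast_nonneg (α := ℝ) a, Nat.cast_nonneg (α := ℝ) b]
  have hnat : 2*a + 3*b ≤ 36 := by
    have : ((2*a + 3*b : ℕ) : ℝ) < 37 := by push_cast; linarith
    exact_mod_cast Nat.lt_succ_iff.mp (by exact_mod_cast this)
  have hfin : 2*(a:ℝ) + 3*(b:ℝ) ≤ 36 := by
    have : ((2*a+3*b:ℕ):ℝ) ≤ 36 := by exact_mod_cast hnat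
    push_cast at this; linarith
  linarith

lemma step_sep {u : ℝ} (hu : 0 ≤ u) {m n : ℕ} (h : m ≠ n) :
    (m:ℝ)*u + u ≤ (n:ℝ)*u ∨ (n:ℝ)*u + u ≤ (m:ℝ)*u := by
  rcases Nat.lt_or_ge m n with hl | hl
  · left
    have h1 : ((m:ℝ)+1) ≤ n := by exact_mod_cast hl
    nlinarith
  · right
    have hl' : n < m := by omega
    have h1 : ((n:ℝ)+1) ≤ m := by exact_mod_cast hl'
    nlinarith

lemma pack1 (δ ε : ℝ) (hδ : 0 < δ) (hδ' : δ < 1/10000) (hε : 0 < ε) (hε' : ε < 1/10000) :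
    ∃ pos : Fin (18 + 0) → ℝ × ℝ,
      RPack (fun i : Fin (18 + 0) => if (i : ℕ) < 18 then 1/4 + 100*δ else 1/4 - 30*δ)
        (fun i : Fin (18 + 0) => if (i : ℕ) < 18 then 1/6 - 2*ε else 1/3 + ε) pos := by
  have hW : (0:ℝ) ≤ 1/4 + 100*δ := by linarith
  have hH : (0:ℝ) ≤ 1/6 - 2*ε := by linarith
  refine ⟨fun i => (((i:ℕ) % 3 : ℕ) * (1/4 + 100*δ), ((i:ℕ) / 3 : ℕ) * (1/6 - 2*ε)), ?_, ?_⟩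
  · intro i
    have hi : (i:ℕ) < 18 := by omega
    have hc : (((i:ℕ) % 3 : ℕ) : ℝ) ≤ 2 := by exact_mod_cast (by omega : (i:ℕ) % 3 ≤ 2)
    have hr : (((i:ℕ) / 3 : ℕ) : ℝ) ≤ 5 := by exact_mod_cast (by omega : (i:ℕ) / 3 ≤ 5)
    simp only [if_pos hi]
    have h1 := mul_le_mul_of_nonneg_right hc hW
    have h2 := mul_le_mul_of_nonneg_right hr hH
    exact ⟨mul_nonneg (Nat.cast_nonneg _) hW, by linarith, mul_nonneg (Nat.cast_nonneg _) hH,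
      by linarith⟩
  · intro i j hij
    have hv : (i:ℕ) ≠ (j:ℕ) := fun h => hij (Fin.ext h)
    simp only [if_pos (show (i:ℕ) < 18 by omega), if_pos (show (j:ℕ) < 18 by omega)]
    by_cases hcc : (i:ℕ) % 3 = (j:ℕ) % 3
    · have hrr : (i:ℕ) / 3 ≠ (j:ℕ) / 3 := by omega
      rcases step_sep hH hrr with h | h
      · exact Or.inr (Or.inr (Or.inl h))
      · exact Or.inr (Or.inr (Or.inr h))
    · rcases step_sep hW hcc with h | h
      · exact Or.inl h
      · exact Or.inr (Or.inl h)

lemma pack2 (δ ε : ℝ) (hδ : 0 < δ) (hδ' : δ < 1/10000) (hε : 0 < ε) (hε' : ε < 1/10000) :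
    ∃ pos : Fin (6 + 8) → ℝ × ℝ,
      RPack (fun i : Fin (6 + 8) => if (i : ℕ) < 6 then 1/4 + 100*δ else 1/4 - 30*δ)
        (fun i : Fin (6 + 8) => if (i : ℕ) < 6 then 1/6 - 2*ε else 1/3 + ε) pos := by
  have hW2 : (0:ℝ) ≤ 1/4 + 100*δ := by linarith
  have hH2 : (0:ℝ) ≤ 1/6 - 2*ε := by linarith
  have hW4 : (0:ℝ) ≤ 1/4 - 30*δ := by linarith
  have hH4 : (0:ℝ) ≤ 1/3 + ε := by linarith
  refine ⟨fun i =>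
    (if (i:ℕ) < 6 then (((i:ℕ) % 3 : ℕ) : ℝ) * (1/4 + 100*δ)
      else ((((i:ℕ) - 6) % 4 : ℕ) : ℝ) * (1/4 - 30*δ),
     if (i:ℕ) < 6 then 2/3 + 2*ε + (((i:ℕ) / 3 : ℕ) : ℝ) * (1/6 - 2*ε)
      else ((((i:ℕ) - 6) / 4 : ℕ) : ℝ) * (1/3 + ε)), ?_, ?_⟩
  · intro i
    by_cases hi : (i:ℕ) < 6
    · have hc : (((i:ℕ) % 3 : ℕ) : ℝ) ≤ 2 := by exact_mod_cast (by omega : (i:ℕ) % 3 ≤ 2)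
      have hr : (((i:ℕ) / 3 : ℕ) : ℝ) ≤ 1 := by exact_mod_cast (by omega : (i:ℕ) / 3 ≤ 1)
      simp only [if_pos hi]
      have h1 := mul_le_mul_of_nonneg_right hc hW2
      have h2 := mul_le_mul_of_nonneg_right hr hH2
      have h3 := mul_nonneg (Nat.cast_nonneg ((i:ℕ) / 3) : (0:ℝ) ≤ _) hH2
      exact ⟨mul_nonneg (Nat.cast_nonneg _) hW2, by linarith, by linarith, by linarith⟩
    · have hc : ((((i:ℕ) - 6) % 4 : ℕ) : ℝ) ≤ 3 := by
        exact_mod_cast (by omega : ((i:ℕ) - 6) % 4 ≤ 3)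
      have hr : ((((i:ℕ) - 6) / 4 : ℕ) : ℝ) ≤ 1 := by
        have : (i:ℕ) < 14 := i.isLt
        exact_mod_cast (by omega : ((i:ℕ) - 6) / 4 ≤ 1)
      simp only [if_neg hi]
      have h1 := mul_le_mul_of_nonneg_right hc hW4
      have h2 := mul_le_mul_of_nonneg_right hr hH4
      exact ⟨mul_nonneg (Nat.cast_nonneg _) hW4, by linarith, mul_nonneg (Nat.cast_nonneg _) hH4,
        by linarith⟩
  · intro i j hij
    have hv : (i:ℕ) ≠ (j:ℕ) := fun h => hij (Fin.ext h)
    by_cases hi : (i:ℕ) < 6 <;> by_cases hj : (j:ℕ) < 6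
    · -- both type 2
      simp only [if_pos hi, if_pos hj]
      by_cases hcc : (i:ℕ) % 3 = (j:ℕ) % 3
      · have hrr : (i:ℕ) / 3 ≠ (j:ℕ) / 3 := by omega
        rcases step_sep hH2 hrr with h | h
        · exact Or.inr (Or.inr (Or.inl (by linarith)))
        · exact Or.inr (Or.inr (Or.inr (by linarith)))
      · rcases step_sep hW2 hcc with h | h
        · exact Or.inl h
        · exact Or.inr (Or.inl h)
    · -- i type 2, j type 4: j below i
      simp only [if_pos hi, if_neg hj]
      have hr : ((((j:ℕ) - 6) / 4 : ℕ) : ℝ) ≤ 1 := by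
        have : (j:ℕ) < 14 := j.isLt
        exact_mod_cast (by omega : ((j:ℕ) - 6) / 4 ≤ 1)
      have h1 := mul_le_mul_of_nonneg_right hr hH4
      have h3 := mul_nonneg (Nat.cast_nonneg ((i:ℕ) / 3) : (0:ℝ) ≤ _) hH2
      exact Or.inr (Or.inr (Or.inr (by linarith)))
    · -- i type 4, j type 2
      simp only [if_neg hi, if_pos hj]
      have hr : ((((i:ℕ) - 6) / 4 : ℕ) : ℝ) ≤ 1 := by
        have : (i:ℕ) < 14 := i.isLt
        exact_mod_cast (by omega : ((i:ℕ) - 6) / 4 ≤ 1)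
      have h1 := mul_le_mul_of_nonneg_right hr hH4
      have h3 := mul_nonneg (Nat.cast_nonneg ((j:ℕ) / 3) : (0:ℝ) ≤ _) hH2
      exact Or.inr (Or.inr (Or.inl (by linarith)))
    · -- both type 4
      simp only [if_neg hi, if_neg hj]
      by_cases hcc : ((i:ℕ) - 6) % 4 = ((j:ℕ) - 6) % 4
      · have hrr : ((i:ℕ) - 6) / 4 ≠ ((j:ℕ) - 6) / 4 := by omega
        rcases step_sep hH4 hrr with h | h
        · exact Or.inr (Or.inr (Or.inl h))
        · exact Or.inr (Or.inr (Or.inr h))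
      · rcases step_sep hW4 hcc with h | h
        · exact Or.inl h
        · exact Or.inr (Or.inl h)

lemma pack3 (δ ε : ℝ) (hδ : 0 < δ) (hδ' : δ < 1/10000) (hε : 0 < ε) (hε' : ε < 1/10000) :
    ∃ pos : Fin (12 + 4) → ℝ × ℝ,
      RPack (fun i : Fin (12 + 4) => if (i : ℕ) < 12 then 1/4 + 100*δ else 1/4 - 30*δ)
        (fun i : Fin (12 + 4) => if (i : ℕ) < 12 then 1/6 - 2*ε else 1/3 + ε) pos := by
  have hW2 : (0:ℝ) ≤ 1/4 + 100*δ := by linarith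
  have hH2 : (0:ℝ) ≤ 1/6 - 2*ε := by linarith
  have hW4 : (0:ℝ) ≤ 1/4 - 30*δ := by linarith
  have hH4 : (0:ℝ) ≤ 1/3 + ε := by linarith
  refine ⟨fun i =>
    (if (i:ℕ) < 12 then (((i:ℕ) % 3 : ℕ) : ℝ) * (1/4 + 100*δ)
      else ((((i:ℕ) - 12) : ℕ) : ℝ) * (1/4 - 30*δ),
     if (i:ℕ) < 12 then 1/3 + ε + (((i:ℕ) / 3 : ℕ) : ℝ) * (1/6 - 2*ε)
      else 0), ?_, ?_⟩
  · intro i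
    by_cases hi : (i:ℕ) < 12
    · have hc : (((i:ℕ) % 3 : ℕ) : ℝ) ≤ 2 := by exact_mod_cast (by omega : (i:ℕ) % 3 ≤ 2)
      have hr : (((i:ℕ) / 3 : ℕ) : ℝ) ≤ 3 := by exact_mod_cast (by omega : (i:ℕ) / 3 ≤ 3)
      simp only [if_pos hi]
      have h1 := mul_le_mul_of_nonneg_right hc hW2
      have h2 := mul_le_mul_of_nonneg_right hr hH2
      have h3 := mul_nonneg (Nat.cast_nonneg ((i:ℕ) / 3) : (0:ℝ) ≤ _) hH2
      exact ⟨mul_nonneg (Nat.cast_nonneg _) hW2, by linarith, by linarith, by linarith⟩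
    · have hc : ((((i:ℕ) - 12) : ℕ) : ℝ) ≤ 3 := by
        have : (i:ℕ) < 16 := i.isLt
        exact_mod_cast (by omega : (i:ℕ) - 12 ≤ 3)
      simp only [if_neg hi]
      have h1 := mul_le_mul_of_nonneg_right hc hW4
      exact ⟨mul_nonneg (Nat.cast_nonneg _) hW4, by linarith, le_refl 0, by linarith⟩
  · intro i j hij
    have hv : (i:ℕ) ≠ (j:ℕ) := fun h => hij (Fin.ext h)
    by_cases hi : (i:ℕ) < 12 <;> by_cases hj : (j:ℕ) < 12
    · simp only [if_pos hi, if_pos hj]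
      by_cases hcc : (i:ℕ) % 3 = (j:ℕ) % 3
      · have hrr : (i:ℕ) / 3 ≠ (j:ℕ) / 3 := by omega
        rcases step_sep hH2 hrr with h | h
        · exact Or.inr (Or.inr (Or.inl (by linarith)))
        · exact Or.inr (Or.inr (Or.inr (by linarith)))
      · rcases step_sep hW2 hcc with h | h
        · exact Or.inl h
        · exact Or.inr (Or.inl h)
    · -- i type 2, j type 4
      simp only [if_pos hi, if_neg hj]
      have h3 := mul_nonneg (Nat.cast_nonneg ((i:ℕ) / 3) : (0:ℝ) ≤ _) hH2
      exact Or.inr (Or.inr (Or.inr (by linarith)))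
    · simp only [if_neg hi, if_pos hj]
      have h3 := mul_nonneg (Nat.cast_nonneg ((j:ℕ) / 3) : (0:ℝ) ≤ _) hH2
      exact Or.inr (Or.inr (Or.inl (by linarith)))
    · simp only [if_neg hi, if_neg hj]
      have hcc : (i:ℕ) - 12 ≠ (j:ℕ) - 12 := by omega
      rcases step_sep hW4 hcc with h | h
      · exact Or.inl h
      · exact Or.inr (Or.inl h)

/-- With weights λ₂ = 48/413, λ₄ = 72/413, the maximum weight of a packing of
type-2 (width 1/4+100δ, height 1/6−2ε) and type-4 (width 1/4−30δ, height 1/3+ε)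
rectangles is 864/413, attained by (18,0), (6,8) and (12,4). -/
theorem stmt7 :
    ∃ δ₀ > (0 : ℝ), ∃ ε₀ > (0 : ℝ), ∀ δ ε : ℝ, 0 < δ → δ < δ₀ → 0 < ε → ε < ε₀ →
      (∀ a b : ℕ, ∀ pos : Fin (a + b) → ℝ × ℝ,
        RPack (fun i : Fin (a + b) => if (i : ℕ) < a then 1/4 + 100*δ else 1/4 - 30*δ)
          (fun i : Fin (a + b) => if (i : ℕ) < a then 1/6 - 2*ε else 1/3 + ε) pos →
        ((48 : ℝ) * a + 72 * b) / 413 ≤ 864 / 413) ∧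
      (∃ pos : Fin (18 + 0) → ℝ × ℝ,
        RPack (fun i : Fin (18 + 0) => if (i : ℕ) < 18 then 1/4 + 100*δ else 1/4 - 30*δ)
          (fun i : Fin (18 + 0) => if (i : ℕ) < 18 then 1/6 - 2*ε else 1/3 + ε) pos) ∧
      (∃ pos : Fin (6 + 8) → ℝ × ℝ,
        RPack (fun i : Fin (6 + 8) => if (i : ℕ) < 6 then 1/4 + 100*δ else 1/4 - 30*δ)
          (fun i : Fin (6 + 8) => if (i : ℕ) < 6 then 1/6 - 2*ε else 1/3 + ε) pos) ∧
      (∃ pos : Fin (12 + 4) → ℝ × ℝ,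
        RPack (fun i : Fin (12 + 4) => if (i : ℕ) < 12 then 1/4 + 100*δ else 1/4 - 30*δ)
          (fun i : Fin (12 + 4) => if (i : ℕ) < 12 then 1/6 - 2*ε else 1/3 + ε) pos) := by
  refine ⟨1/10000, by norm_num, 1/10000, by norm_num, ?_⟩
  intro δ ε hδ hδ' hε hε'
  exact ⟨fun a b pos hp => upper δ ε hδ hδ' hε hε' a b pos hp,
    pack1 δ ε hδ hδ' hε hε', pack2 δ ε hδ hδ' hε hε', pack3 δ ε hδ hδ' hε hε'⟩
end

section
/- In the unit square, consider axis-parallel rectangles of type 3 (width 1/2 + 200δ, height 1/6 − 2ε) and type 4 (width 1/4 − 30δ, height 1/3 + ε), for sufficiently small δ, ε > 0. With weights λ_3 = 96/413 and λ_4 = 72/413, the maximum weight of any non-overlapping packing using only these types is 816/413, attained by the pattern with 4 type-3 and 6 type-4 items. -/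
open MeasureTheory Set
open scoped ENNReal


lemma sum_len_le_one {ι : Type*} (s : Finset ι) (y c : ι → ℝ)
    (hc : ∀ i ∈ s, 0 ≤ c i)
    (h1 : ∀ i ∈ s, 0 ≤ y i) (h2 : ∀ i ∈ s, y i + c i ≤ 1)
    (hd : ∀ i ∈ s, ∀ j ∈ s, i ≠ j → y i + c i ≤ y j ∨ y j + c j ≤ y i) :
    ∑ i ∈ s, c i ≤ 1 := by
  have hdisj : (↑s : Set ι).PairwiseDisjoint (fun i => Ioo (y i) (y i + c i)) := by
    intro i hi j hj hij
    rcases hd i hi j hj hij with h | h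
    · exact Ioo_disjoint_Ioo.2 (by simp [min_le_iff, le_max_iff]; tauto)
    · exact Ioo_disjoint_Ioo.2 (by simp [min_le_iff, le_max_iff]; tauto)
  have hmeas : ∀ i ∈ s, MeasurableSet (Ioo (y i) (y i + c i)) := fun i _ => measurableSet_Ioo
  have key := measure_biUnion_finset hdisj hmeas (μ := volume)
  have hsub : (⋃ i ∈ s, Ioo (y i) (y i + c i)) ⊆ Icc (0:ℝ) 1 := by
    intro x hx
    simp only [mem_iUnion] at hx
    obtain ⟨i, hi, hx⟩ := hx
    exact ⟨le_trans (h1 i hi) hx.1.le, le_trans hx.2.le (h2 i hi)⟩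
  have hle : ∑ i ∈ s, volume (Ioo (y i) (y i + c i)) ≤ 1 := by
    rw [← key]
    calc volume (⋃ i ∈ s, Ioo (y i) (y i + c i)) ≤ volume (Icc (0:ℝ) 1) :=
          measure_mono hsub
      _ = 1 := by simp
  have : ENNReal.ofReal (∑ i ∈ s, c i) ≤ 1 := by
    rw [ENNReal.ofReal_sum_of_nonneg hc]
    calc ∑ i ∈ s, ENNReal.ofReal (c i) = ∑ i ∈ s, volume (Ioo (y i) (y i + c i)) := by
          refine Finset.sum_congr rfl fun i hi => ?_
          rw [Real.volume_Ioo]; ring_nf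
      _ ≤ 1 := hle
  have h01 : (1 : ℝ≥0∞) = ENNReal.ofReal 1 := by simp
  rw [h01] at this
  exact (ENNReal.ofReal_le_ofReal_iff (by norm_num)).1 this

lemma master {δ ε : ℝ} (hδ : 0 < δ) (hδ' : δ < 1/10000) (hε : 0 < ε) (hε' : ε < 1/10000)
    {a b : ℕ} {pos : Fin (a+b) → ℝ × ℝ}
    (hp : RPack (fun i : Fin (a+b) => if (i:ℕ) < a then 1/2+200*δ else 1/4-30*δ)
                (fun i : Fin (a+b) => if (i:ℕ) < a then 1/6-2*ε else 1/3+ε) pos) :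
    (b:ℝ) * ((1/3+ε)*(1/4-30*δ)) + (a:ℝ) * (1/6-2*ε)
      ≤ 1 + (a:ℝ) * ((1/6-2*ε) * (1/4-30*δ)) := by
  classical
  obtain ⟨hin, hdis⟩ := hp
  set w3 : ℝ := 1/2+200*δ with hw3d
  set w4 : ℝ := 1/4-30*δ with hw4d
  set h3 : ℝ := 1/6-2*ε with hh3d
  set h4 : ℝ := 1/3+ε with hh4d
  clear_value w3 w4 h3 h4
  have hw4 : 0 < w4 := by rw [hw4d]; linarith
  have hh3 : 0 < h3 := by rw [hh3d]; linarith
  have hh4 : 0 < h4 := by rw [hh4d]; linarith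
  set X : Fin (a+b) → ℝ := fun i => (pos i).1 with hX
  set Y : Fin (a+b) → ℝ := fun i => (pos i).2 with hY
  -- basic containment facts
  have hX0 : ∀ i, 0 ≤ X i := fun i => (hin i).1
  have hY0 : ∀ i, 0 ≤ Y i := fun i => (hin i).2.2.1
  have hX3 : ∀ i : Fin (a+b), (i:ℕ) < a → X i + w3 ≤ 1 := by
    intro i hi; simpa [hi] using (hin i).2.1
  have hX4 : ∀ i : Fin (a+b), ¬ (i:ℕ) < a → X i + w4 ≤ 1 := by
    intro i hi; simpa [hi] using (hin i).2.1
  have hY3 : ∀ i : Fin (a+b), (i:ℕ) < a → Y i + h3 ≤ 1 := by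
    intro i hi; simpa [hi] using (hin i).2.2.2
  have hY4 : ∀ i : Fin (a+b), ¬ (i:ℕ) < a → Y i + h4 ≤ 1 := by
    intro i hi; simpa [hi] using (hin i).2.2.2
  -- disjointness specialized
  have hd34 : ∀ i j : Fin (a+b), (i:ℕ) < a → ¬ (j:ℕ) < a →
      X i + w3 ≤ X j ∨ X j + w4 ≤ X i ∨ Y i + h3 ≤ Y j ∨ Y j + h4 ≤ Y i := by
    intro i j hi hj
    have hne : i ≠ j := fun h => hj (h ▸ hi)
    simpa [hi, hj] using hdis i j hne
  have hd33 : ∀ i j : Fin (a+b), (i:ℕ) < a → (j:ℕ) < a → i ≠ j →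
      Y i + h3 ≤ Y j ∨ Y j + h3 ≤ Y i := by
    intro i j hi hj hne
    have h' : X i + w3 ≤ X j ∨ X j + w3 ≤ X i ∨ Y i + h3 ≤ Y j ∨ Y j + h3 ≤ Y i := by
      simpa [hi, hj] using hdis i j hne
    rcases h' with h | h | h | h
    · exfalso; have := hX3 j hj; have := hX0 i; linarith
    · exfalso; have := hX3 i hi; have := hX0 j; linarith
    · exact Or.inl h
    · exact Or.inr h
  have hd44 : ∀ i j : Fin (a+b), ¬ (i:ℕ) < a → ¬ (j:ℕ) < a → i ≠ j →
      X i + w4 ≤ X j ∨ X j + w4 ≤ X i ∨ Y i + h4 ≤ Y j ∨ Y j + h4 ≤ Y i := by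
    intro i j hi hj hne
    simpa [hi, hj] using hdis i j hne
  -- index sets
  set T3 : Finset (Fin (a+b)) := Finset.univ.filter (fun i => (i:ℕ) < a) with hT3
  set T4 : Finset (Fin (a+b)) := Finset.univ.filter (fun i => ¬ (i:ℕ) < a) with hT4
  have cardT3 : T3.card = a := by
    rw [hT3, Finset.card_filter]
    rw [Fin.sum_univ_eq_sum_range (fun k => if k < a then 1 else 0)]
    rw [← Finset.sum_filter]
    have : Finset.filter (fun k => k < a) (Finset.range (a+b)) = Finset.range a := by
      ext k; simp [Finset.mem_range]; omega
    rw [this]; simp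
  have cardT4 : T4.card = b := by
    have := Finset.card_filter_add_card_filter_not
      (s := (Finset.univ : Finset (Fin (a+b)))) (p := fun i => (i:ℕ) < a)
    rw [← hT3, ← hT4] at this
    simp only [Finset.card_univ, Fintype.card_fin] at this
    omega
  -- the open y-intervals
  set C : Set ℝ := ⋃ i ∈ T3, Ioo (Y i) (Y i + h3) with hC
  have hCmeas : MeasurableSet C := by
    exact Finset.measurableSet_biUnion _ (fun i _ => measurableSet_Ioo)
  have hCsub : C ⊆ Icc (0:ℝ) 1 := by
    intro x hx
    simp only [hC, mem_iUnion] at hx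
    obtain ⟨i, hi, hx⟩ := hx
    have hia : (i:ℕ) < a := by simpa [hT3] using hi
    exact ⟨le_trans (hY0 i) hx.1.le, le_trans hx.2.le (hY3 i hia)⟩
  have hT3mem : ∀ i ∈ T3, (i:ℕ) < a := by intro i hi; simpa [hT3] using hi
  have hT4mem : ∀ j ∈ T4, ¬ (j:ℕ) < a := by intro j hj; simpa [hT4] using hj
  -- rows pairwise disjoint as sets
  have hIoo_disj : ∀ (p q r s : ℝ), q ≤ r → Disjoint (Ioo p q) (Ioo r s) := by
    intro p q r s h
    exact Set.disjoint_left.2 (fun x hx hx' => absurd (lt_of_lt_of_le hx.2 h) (not_lt.2 hx'.1.le))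
  have hrowPD : (↑T3 : Set (Fin (a+b))).PairwiseDisjoint
      (fun i => Ioo (Y i) (Y i + h3)) := by
    intro i hi j hj hij
    rcases hd33 i j (hT3mem i hi) (hT3mem j hj) hij with h | h
    · exact hIoo_disj _ _ _ _ h
    · exact (hIoo_disj _ _ _ _ h).symm
  have hCvol : volume C = (a : ℝ≥0∞) * ENNReal.ofReal h3 := by
    rw [hC, measure_biUnion_finset hrowPD (fun i _ => measurableSet_Ioo)]
    have : ∀ i ∈ T3, volume (Ioo (Y i) (Y i + h3)) = ENNReal.ofReal h3 := by
      intro i _; rw [Real.volume_Ioo]; ring_nf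
    rw [Finset.sum_congr rfl this, Finset.sum_const, cardT3, nsmul_eq_mul]
  -- type-4 intervals and their measures
  set I : Fin (a+b) → Set ℝ := fun j => Ioo (Y j) (Y j + h4) with hI
  set v : Fin (a+b) → ℝ≥0∞ := fun j => volume (I j ∩ C) with hv
  set u : Fin (a+b) → ℝ≥0∞ := fun j => volume (I j \ C) with hu
  have hvu : ∀ j, v j + u j = ENNReal.ofReal h4 := by
    intro j
    rw [hv, hu]
    have := measure_inter_add_diff (μ := volume) (I j) hCmeas
    rw [this, hI]
    simp only []
    rw [Real.volume_Ioo]; ring_nf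
  -- classification predicates
  set yOv : Fin (a+b) → Fin (a+b) → Prop :=
    fun i j => ¬ (Y i + h3 ≤ Y j ∨ Y j + h4 ≤ Y i) with hyOv
  set Lp : Fin (a+b) → Prop :=
    fun j => ∃ i : Fin (a+b), (i:ℕ) < a ∧ yOv i j ∧ X j + w4 ≤ X i with hLp
  set Rp : Fin (a+b) → Prop :=
    fun j => ∃ i : Fin (a+b), (i:ℕ) < a ∧ yOv i j ∧ X i + w3 ≤ X j with hRp
  -- basic consequences
  have hLx : ∀ j, Lp j → X j ≤ 1 - w3 - w4 := by
    intro j hj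
    obtain ⟨i, hia, _, hxx⟩ := hj
    have := hX3 i hia
    linarith
  have hRx : ∀ j, Rp j → w3 ≤ X j := by
    intro j hj
    obtain ⟨i, hia, _, hxx⟩ := hj
    have := hX0 i
    linarith
  -- yOv gives interval overlap; its negation gives disjoint Ioo's
  have hNov34 : ∀ i j : Fin (a+b), ¬ yOv i j → Disjoint (Ioo (Y i) (Y i + h3)) (I j) := by
    intro i j hn
    rw [hyOv] at hn
    rcases not_not.mp hn with h | h
    · exact hIoo_disj _ _ _ _ h
    · exact (hIoo_disj _ _ _ _ h).symm
  -- L-type rectangles are pairwise y-disjoint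
  have hLpair : ∀ j ∈ T4, ∀ j' ∈ T4, Lp j → Lp j' → j ≠ j' → Disjoint (I j) (I j') := by
    intro j hj j' hj' hLj hLj' hne
    have hxj := hLx j hLj
    have hxj' := hLx j' hLj'
    rcases hd44 j j' (hT4mem j hj) (hT4mem j' hj') hne with h | h | h | h
    · exfalso; have := hX0 j; linarith
    · exfalso; have := hX0 j'; linarith
    · exact hIoo_disj _ _ _ _ h
    · exact (hIoo_disj _ _ _ _ h).symm
  -- R-type rectangles are pairwise y-disjoint
  have hRpair : ∀ j ∈ T4, ∀ j' ∈ T4, Rp j → Rp j' → j ≠ j' → Disjoint (I j) (I j') := by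
    intro j hj j' hj' hRj hRj' hne
    have hxj := hRx j hRj
    have hxj' := hRx j' hRj'
    have h4j := hX4 j (hT4mem j hj)
    have h4j' := hX4 j' (hT4mem j' hj')
    rcases hd44 j j' (hT4mem j hj) (hT4mem j' hj') hne with h | h | h | h
    · exfalso; linarith
    · exfalso; linarith
    · exact hIoo_disj _ _ _ _ h
    · exact (hIoo_disj _ _ _ _ h).symm
  -- an L-type rectangle is y-disjoint from every "right-leaning-free" row (X i < w4)
  have hLrow : ∀ j ∈ T4, Lp j → ∀ i : Fin (a+b), (i:ℕ) < a → X i < w4 →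
      Disjoint (Ioo (Y i) (Y i + h3)) (I j) := by
    intro j hj hLj i hia hxi
    have hxj := hLx j hLj
    have hj0 := hX0 j
    have hi0 := hX0 i
    rcases hd34 i j hia (hT4mem j hj) with h | h | h | h
    · exfalso; linarith
    · exfalso; linarith
    · exact hIoo_disj _ _ _ _ h
    · exact (hIoo_disj _ _ _ _ h).symm
  -- an R-type rectangle is y-disjoint from every row with w4 ≤ X i
  have hRrow : ∀ j ∈ T4, Rp j → ∀ i : Fin (a+b), (i:ℕ) < a → w4 ≤ X i →
      Disjoint (Ioo (Y i) (Y i + h3)) (I j) := by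
    intro j hj hRj i hia hxi
    have hxj := hRx j hRj
    have h4j := hX4 j (hT4mem j hj)
    have h3i := hX3 i hia
    rcases hd34 i j hia (hT4mem j hj) with h | h | h | h
    · exfalso; linarith
    · exfalso; linarith
    · exact hIoo_disj _ _ _ _ h
    · exact (hIoo_disj _ _ _ _ h).symm
  -- an M rectangle is y-disjoint from all rows
  have hMrow : ∀ j ∈ T4, ¬ Lp j → ¬ Rp j → Disjoint (I j) C := by
    intro j hj hLj hRj
    rw [hC]
    rw [Set.disjoint_iUnion₂_right]
    intro i hi
    have hia := hT3mem i hi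
    by_cases hov : yOv i j
    · exfalso
      rcases hd34 i j hia (hT4mem j hj) with h | h | h | h
      · exact hRj ⟨i, hia, hov, h⟩
      · exact hLj ⟨i, hia, hov, h⟩
      · exact hov (Or.inl h)
      · exact hov (Or.inr h)
    · exact (hNov34 i j hov).symm
  -- split T4
  set LF : Finset (Fin (a+b)) := T4.filter Lp with hLF
  set NF : Finset (Fin (a+b)) := T4.filter (fun j => ¬ Lp j) with hNF
  set RF : Finset (Fin (a+b)) := NF.filter Rp with hRF
  set MF : Finset (Fin (a+b)) := NF.filter (fun j => ¬ Rp j) with hMF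
  have hsplit : ∑ j ∈ T4, v j = ∑ j ∈ LF, v j + (∑ j ∈ RF, v j + ∑ j ∈ MF, v j) := by
    rw [hRF, hMF, hNF, hLF]
    rw [← Finset.sum_filter_add_sum_filter_not T4 Lp v]
    congr 1
    exact (Finset.sum_filter_add_sum_filter_not _ Rp v).symm
  have hMzero : ∀ j ∈ MF, v j = 0 := by
    intro j hjM
    rw [hMF, hNF] at hjM
    simp only [Finset.mem_filter] at hjM
    obtain ⟨⟨hjT4, hnL⟩, hnR⟩ := hjM
    have := hMrow j hjT4 hnL hnR
    rw [hv]
    simp only []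
    rw [Set.disjoint_iff_inter_eq_empty.mp this]
    exact measure_empty
  -- the L-sum
  have hLsum : ∑ j ∈ LF, v j
      ≤ ((T3.filter (fun i => w4 ≤ X i)).card : ℝ≥0∞) * ENNReal.ofReal h3 := by
    have hPD : (↑LF : Set (Fin (a+b))).PairwiseDisjoint (fun j => I j ∩ C) := by
      intro j hj j' hj' hne
      simp only [hLF, Finset.coe_filter, mem_setOf_eq] at hj hj'
      exact ((hLpair j hj.1 j' hj'.1 hj.2 hj'.2 hne).mono inter_subset_left
        inter_subset_left)
    have heq : ∑ j ∈ LF, v j = volume (⋃ j ∈ LF, (I j ∩ C)) := by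
      rw [measure_biUnion_finset hPD
        (fun j _ => (measurableSet_Ioo).inter hCmeas)]
    rw [heq]
    have hsub : (⋃ j ∈ LF, (I j ∩ C)) ⊆
        ⋃ i ∈ T3.filter (fun i => w4 ≤ X i), Ioo (Y i) (Y i + h3) := by
      intro x hx
      simp only [mem_iUnion] at hx ⊢
      obtain ⟨j, hjL, hxj, hxC⟩ := hx
      rw [hC] at hxC
      simp only [mem_iUnion] at hxC
      obtain ⟨i, hiT3, hxi⟩ := hxC
      have hia := hT3mem i hiT3
      simp only [hLF, Finset.mem_filter] at hjL
      by_cases hw : w4 ≤ X i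
      · exact ⟨i, Finset.mem_filter.2 ⟨hiT3, hw⟩, hxi⟩
      · exfalso
        have := hLrow j hjL.1 hjL.2 i hia (not_le.mp hw)
        exact (Set.disjoint_left.mp this hxi) hxj
    calc volume (⋃ j ∈ LF, (I j ∩ C))
        ≤ volume (⋃ i ∈ T3.filter (fun i => w4 ≤ X i), Ioo (Y i) (Y i + h3)) :=
          measure_mono hsub
      _ ≤ ∑ i ∈ T3.filter (fun i => w4 ≤ X i), volume (Ioo (Y i) (Y i + h3)) :=
          measure_biUnion_finset_le _ _
      _ = ((T3.filter (fun i => w4 ≤ X i)).card : ℝ≥0∞) * ENNReal.ofReal h3 := by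
          have : ∀ i ∈ T3.filter (fun i => w4 ≤ X i),
              volume (Ioo (Y i) (Y i + h3)) = ENNReal.ofReal h3 := by
            intro i _; rw [Real.volume_Ioo]; ring_nf
          rw [Finset.sum_congr rfl this, Finset.sum_const, nsmul_eq_mul]
  -- the R-sum
  have hRsum : ∑ j ∈ RF, v j
      ≤ ((T3.filter (fun i => ¬ w4 ≤ X i)).card : ℝ≥0∞) * ENNReal.ofReal h3 := by
    have hPD : (↑RF : Set (Fin (a+b))).PairwiseDisjoint (fun j => I j ∩ C) := by
      intro j hj j' hj' hne
      simp only [hRF, hNF, Finset.coe_filter, mem_setOf_eq, Finset.mem_filter] at hj hj'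
      exact ((hRpair j hj.1.1 j' hj'.1.1 hj.2 hj'.2 hne).mono inter_subset_left
        inter_subset_left)
    have heq : ∑ j ∈ RF, v j = volume (⋃ j ∈ RF, (I j ∩ C)) := by
      rw [measure_biUnion_finset hPD
        (fun j _ => (measurableSet_Ioo).inter hCmeas)]
    rw [heq]
    have hsub : (⋃ j ∈ RF, (I j ∩ C)) ⊆
        ⋃ i ∈ T3.filter (fun i => ¬ w4 ≤ X i), Ioo (Y i) (Y i + h3) := by
      intro x hx
      simp only [mem_iUnion] at hx ⊢
      obtain ⟨j, hjR, hxj, hxC⟩ := hx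
      rw [hC] at hxC
      simp only [mem_iUnion] at hxC
      obtain ⟨i, hiT3, hxi⟩ := hxC
      have hia := hT3mem i hiT3
      simp only [hRF, hNF, Finset.mem_filter] at hjR
      by_cases hw : w4 ≤ X i
      · exfalso
        have := hRrow j hjR.1.1 hjR.2 i hia hw
        exact (Set.disjoint_left.mp this hxi) hxj
      · exact ⟨i, Finset.mem_filter.2 ⟨hiT3, hw⟩, hxi⟩
    calc volume (⋃ j ∈ RF, (I j ∩ C))
        ≤ volume (⋃ i ∈ T3.filter (fun i => ¬ w4 ≤ X i), Ioo (Y i) (Y i + h3)) :=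
          measure_mono hsub
      _ ≤ ∑ i ∈ T3.filter (fun i => ¬ w4 ≤ X i), volume (Ioo (Y i) (Y i + h3)) :=
          measure_biUnion_finset_le _ _
      _ = ((T3.filter (fun i => ¬ w4 ≤ X i)).card : ℝ≥0∞) * ENNReal.ofReal h3 := by
          have : ∀ i ∈ T3.filter (fun i => ¬ w4 ≤ X i),
              volume (Ioo (Y i) (Y i + h3)) = ENNReal.ofReal h3 := by
            intro i _; rw [Real.volume_Ioo]; ring_nf
          rw [Finset.sum_congr rfl this, Finset.sum_const, nsmul_eq_mul]
  have hvsum : ∑ j ∈ T4, v j ≤ (a : ℝ≥0∞) * ENNReal.ofReal h3 := by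
    rw [hsplit]
    have hM0 : ∑ j ∈ MF, v j = 0 := Finset.sum_eq_zero hMzero
    rw [hM0, add_zero]
    calc ∑ j ∈ LF, v j + ∑ j ∈ RF, v j
        ≤ ((T3.filter (fun i => w4 ≤ X i)).card : ℝ≥0∞) * ENNReal.ofReal h3
          + ((T3.filter (fun i => ¬ w4 ≤ X i)).card : ℝ≥0∞) * ENNReal.ofReal h3 :=
          add_le_add hLsum hRsum
      _ = (a : ℝ≥0∞) * ENNReal.ofReal h3 := by
          rw [← add_mul]
          congr 1
          rw [← Nat.cast_add]
          congr 1
          rw [Finset.card_filter_add_card_filter_not, cardT3]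
  -- 2-dimensional area bound
  have hprodvol : ∀ (s t : Set ℝ), volume (s ×ˢ t) = volume s * volume t := by
    intro s t; rw [← Measure.prod_prod]; rfl
  set V : Fin (a+b) → Set (ℝ × ℝ) := fun j => Ioo (X j) (X j + w4) ×ˢ (I j \ C) with hV
  have hVmeas : ∀ j, MeasurableSet (V j) := by
    intro j
    exact (measurableSet_Ioo).prod ((measurableSet_Ioo).diff hCmeas)
  have hVvol : ∀ j, volume (V j) = ENNReal.ofReal w4 * u j := by
    intro j
    rw [hV]
    simp only []
    rw [hprodvol, Real.volume_Ioo, hu]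
    congr 1
    ring_nf
  have hVPD : (↑T4 : Set (Fin (a+b))).PairwiseDisjoint V := by
    intro j hj j' hj' hne
    simp only [Finset.mem_coe] at hj hj'
    rcases hd44 j j' (hT4mem j hj) (hT4mem j' hj') hne with h | h | h | h
    · exact Set.Disjoint.set_prod_left (hIoo_disj _ _ _ _ h) _ _
    · exact Set.Disjoint.set_prod_left ((hIoo_disj _ _ _ _ h).symm) _ _
    · exact Set.Disjoint.set_prod_right
        ((hIoo_disj _ _ _ _ h).mono diff_subset diff_subset) _ _
    · exact Set.Disjoint.set_prod_right
        (((hIoo_disj _ _ _ _ h).symm).mono diff_subset diff_subset) _ _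
  have hUsum : volume (⋃ j ∈ T4, V j) = ∑ j ∈ T4, ENNReal.ofReal w4 * u j := by
    rw [measure_biUnion_finset hVPD (fun j _ => hVmeas j)]
    exact Finset.sum_congr rfl (fun j _ => hVvol j)
  set Q : Set (ℝ × ℝ) := Icc (0:ℝ) 1 ×ˢ C with hQ
  have hQmeas : MeasurableSet Q := measurableSet_Icc.prod hCmeas
  have hQvol : volume Q = (a : ℝ≥0∞) * ENNReal.ofReal h3 := by
    rw [hQ, hprodvol, hCvol, Real.volume_Icc]
    norm_num
  have hdisjUQ : Disjoint (⋃ j ∈ T4, V j) Q := by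
    rw [Set.disjoint_iUnion₂_left]
    intro j _
    rw [hV, hQ]
    exact Set.Disjoint.set_prod_right disjoint_sdiff_left _ _
  have hD : ∑ j ∈ T4, ENNReal.ofReal w4 * u j + (a : ℝ≥0∞) * ENNReal.ofReal h3 ≤ 1 := by
    rw [← hUsum, ← hQvol]
    rw [← measure_union hdisjUQ hQmeas]
    have hsub : (⋃ j ∈ T4, V j) ∪ Q ⊆ Icc (0:ℝ) 1 ×ˢ Icc (0:ℝ) 1 := by
      apply Set.union_subset
      · intro p hp
        simp only [mem_iUnion] at hp
        obtain ⟨j, hj, hp⟩ := hp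
        rw [hV] at hp
        simp only [mem_prod] at hp ⊢
        constructor
        · exact ⟨le_trans (hX0 j) hp.1.1.le, le_trans hp.1.2.le (hX4 j (hT4mem j hj))⟩
        · have hy := hp.2.1
          exact ⟨le_trans (hY0 j) hy.1.le, le_trans hy.2.le (hY4 j (hT4mem j hj))⟩
      · rw [hQ]
        exact Set.prod_mono le_rfl hCsub
    calc volume ((⋃ j ∈ T4, V j) ∪ Q) ≤ volume (Icc (0:ℝ) 1 ×ˢ Icc (0:ℝ) 1) :=
          measure_mono hsub
      _ = 1 := by rw [hprodvol, Real.volume_Icc]; norm_num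
  -- total length of the type-4 intervals
  have hbh4 : (b : ℝ≥0∞) * ENNReal.ofReal h4 = ∑ j ∈ T4, v j + ∑ j ∈ T4, u j := by
    rw [← Finset.sum_add_distrib]
    rw [Finset.sum_congr rfl (fun j _ => hvu j), Finset.sum_const, cardT4, nsmul_eq_mul]
  -- final ENNReal inequality
  have hfinal : (b : ℝ≥0∞) * ENNReal.ofReal h4 * ENNReal.ofReal w4
      + (a : ℝ≥0∞) * ENNReal.ofReal h3
      ≤ 1 + (a : ℝ≥0∞) * ENNReal.ofReal h3 * ENNReal.ofReal w4 := by
    have step1 : (b : ℝ≥0∞) * ENNReal.ofReal h4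
        ≤ (a : ℝ≥0∞) * ENNReal.ofReal h3 + ∑ j ∈ T4, u j := by
      rw [hbh4]
      exact add_le_add_left hvsum _
    have step2 : (b : ℝ≥0∞) * ENNReal.ofReal h4 * ENNReal.ofReal w4
        ≤ (a : ℝ≥0∞) * ENNReal.ofReal h3 * ENNReal.ofReal w4
          + ∑ j ∈ T4, ENNReal.ofReal w4 * u j := by
      calc (b : ℝ≥0∞) * ENNReal.ofReal h4 * ENNReal.ofReal w4
          ≤ ((a : ℝ≥0∞) * ENNReal.ofReal h3 + ∑ j ∈ T4, u j) * ENNReal.ofReal w4 :=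
            mul_le_mul_left step1 _
        _ = (a : ℝ≥0∞) * ENNReal.ofReal h3 * ENNReal.ofReal w4
            + ∑ j ∈ T4, ENNReal.ofReal w4 * u j := by
            rw [add_mul, Finset.sum_mul]
            congr 1
            exact Finset.sum_congr rfl (fun j _ => mul_comm _ _)
    calc (b : ℝ≥0∞) * ENNReal.ofReal h4 * ENNReal.ofReal w4
        + (a : ℝ≥0∞) * ENNReal.ofReal h3
        ≤ ((a : ℝ≥0∞) * ENNReal.ofReal h3 * ENNReal.ofReal w4
            + ∑ j ∈ T4, ENNReal.ofReal w4 * u j) + (a : ℝ≥0∞) * ENNReal.ofReal h3 :=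
          add_le_add_left step2 _
      _ = (a : ℝ≥0∞) * ENNReal.ofReal h3 * ENNReal.ofReal w4
          + (∑ j ∈ T4, ENNReal.ofReal w4 * u j + (a : ℝ≥0∞) * ENNReal.ofReal h3) := by
          ring
      _ ≤ (a : ℝ≥0∞) * ENNReal.ofReal h3 * ENNReal.ofReal w4 + 1 := add_le_add_right hD _
      _ = 1 + (a : ℝ≥0∞) * ENNReal.ofReal h3 * ENNReal.ofReal w4 := add_comm _ _
  -- convert to a real inequality
  have hreal : (b:ℝ) * (h4 * w4) + (a:ℝ) * h3 ≤ 1 + (a:ℝ) * (h3 * w4) := by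
    have e1 : (b : ℝ≥0∞) * ENNReal.ofReal h4 * ENNReal.ofReal w4
        + (a : ℝ≥0∞) * ENNReal.ofReal h3
        = ENNReal.ofReal ((b:ℝ) * (h4 * w4) + (a:ℝ) * h3) := by
      rw [ENNReal.ofReal_add (by positivity) (by positivity)]
      rw [ENNReal.ofReal_mul (by positivity), ENNReal.ofReal_mul (by positivity),
        ENNReal.ofReal_mul (by positivity)]
      rw [ENNReal.ofReal_natCast, ENNReal.ofReal_natCast]
      ring
    have e2 : (1 : ℝ≥0∞) + (a : ℝ≥0∞) * ENNReal.ofReal h3 * ENNReal.ofReal w4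
        = ENNReal.ofReal (1 + (a:ℝ) * (h3 * w4)) := by
      rw [ENNReal.ofReal_add (by norm_num) (by positivity)]
      rw [ENNReal.ofReal_mul (by positivity), ENNReal.ofReal_mul (by positivity)]
      rw [ENNReal.ofReal_natCast]
      norm_num
      ring
    rw [e1, e2] at hfinal
    exact (ENNReal.ofReal_le_ofReal_iff (by positivity)).1 hfinal
  exact hreal


lemma counts {δ ε : ℝ} (hδ : 0 < δ) (hδ' : δ < 1/10000) (hε : 0 < ε) (hε' : ε < 1/10000)
    {a b : ℕ} {pos : Fin (a+b) → ℝ × ℝ}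
    (hp : RPack (fun i : Fin (a+b) => if (i:ℕ) < a then 1/2+200*δ else 1/4-30*δ)
                (fun i : Fin (a+b) => if (i:ℕ) < a then 1/6-2*ε else 1/3+ε) pos) :
    a ≤ 6 ∧ b ≤ 8 := by
  classical
  obtain ⟨hin, hdis⟩ := hp
  set X : Fin (a+b) → ℝ := fun i => (pos i).1 with hX
  set Y : Fin (a+b) → ℝ := fun i => (pos i).2 with hY
  have hX0 : ∀ i, 0 ≤ X i := fun i => (hin i).1
  have hY0 : ∀ i, 0 ≤ Y i := fun i => (hin i).2.2.1
  have hX3 : ∀ i : Fin (a+b), (i:ℕ) < a → X i + (1/2+200*δ) ≤ 1 := by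
    intro i hi; simpa [hi] using (hin i).2.1
  have hX4 : ∀ i : Fin (a+b), ¬ (i:ℕ) < a → X i + (1/4-30*δ) ≤ 1 := by
    intro i hi; simpa [hi] using (hin i).2.1
  have hY3 : ∀ i : Fin (a+b), (i:ℕ) < a → Y i + (1/6-2*ε) ≤ 1 := by
    intro i hi; simpa [hi] using (hin i).2.2.2
  have hY4 : ∀ i : Fin (a+b), ¬ (i:ℕ) < a → Y i + (1/3+ε) ≤ 1 := by
    intro i hi; simpa [hi] using (hin i).2.2.2
  have hd33 : ∀ i j : Fin (a+b), (i:ℕ) < a → (j:ℕ) < a → i ≠ j →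
      Y i + (1/6-2*ε) ≤ Y j ∨ Y j + (1/6-2*ε) ≤ Y i := by
    intro i j hi hj hne
    have h' : X i + (1/2+200*δ) ≤ X j ∨ X j + (1/2+200*δ) ≤ X i ∨
        Y i + (1/6-2*ε) ≤ Y j ∨ Y j + (1/6-2*ε) ≤ Y i := by
      simpa [hi, hj] using hdis i j hne
    rcases h' with h | h | h | h
    · exfalso; have := hX3 j hj; have := hX0 i; linarith
    · exfalso; have := hX3 i hi; have := hX0 j; linarith
    · exact Or.inl h
    · exact Or.inr h
  have hd44 : ∀ i j : Fin (a+b), ¬ (i:ℕ) < a → ¬ (j:ℕ) < a → i ≠ j →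
      X i + (1/4-30*δ) ≤ X j ∨ X j + (1/4-30*δ) ≤ X i ∨
      Y i + (1/3+ε) ≤ Y j ∨ Y j + (1/3+ε) ≤ Y i := by
    intro i j hi hj hne
    simpa [hi, hj] using hdis i j hne
  set T3 : Finset (Fin (a+b)) := Finset.univ.filter (fun i => (i:ℕ) < a) with hT3
  set T4 : Finset (Fin (a+b)) := Finset.univ.filter (fun i => ¬ (i:ℕ) < a) with hT4
  have cardT3 : T3.card = a := by
    rw [hT3, Finset.card_filter]
    rw [Fin.sum_univ_eq_sum_range (fun k => if k < a then 1 else 0)]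
    rw [← Finset.sum_filter]
    have : Finset.filter (fun k => k < a) (Finset.range (a+b)) = Finset.range a := by
      ext k; simp [Finset.mem_range]; omega
    rw [this]; simp
  have cardT4 : T4.card = b := by
    have := Finset.card_filter_add_card_filter_not
      (s := (Finset.univ : Finset (Fin (a+b)))) (p := fun i => (i:ℕ) < a)
    rw [← hT3, ← hT4] at this
    simp only [Finset.card_univ, Fintype.card_fin] at this
    omega
  constructor
  · -- a ≤ 6
    have hsum := sum_len_le_one T3 Y (fun _ => 1/6-2*ε)
      (fun i _ => by linarith) (fun i hi => hY0 i)
      (fun i hi => hY3 i (by simpa [hT3] using hi))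
      (fun i hi j hj hne => hd33 i j (by simpa [hT3] using hi) (by simpa [hT3] using hj) hne)
    rw [Finset.sum_const, cardT3, nsmul_eq_mul] at hsum
    by_contra hcon
    push_neg at hcon
    have : (7:ℝ) ≤ (a:ℕ) := by exact_mod_cast hcon
    nlinarith
  · -- b ≤ 8
    set S1 : Finset (Fin (a+b)) := T4.filter (fun j => Y j < 1/3) with hS1
    set S2 : Finset (Fin (a+b)) := T4.filter (fun j => ¬ Y j < 1/3) with hS2
    have hcards : S1.card + S2.card = b := by
      rw [hS1, hS2, Finset.card_filter_add_card_filter_not, cardT4]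
    have hover : ∀ (c : ℝ), ∀ j ∈ T4, ∀ j' ∈ T4, j ≠ j' →
        Y j < c → c < Y j + (1/3+ε) → Y j' < c → c < Y j' + (1/3+ε) →
        X j + (1/4-30*δ) ≤ X j' ∨ X j' + (1/4-30*δ) ≤ X j := by
      intro c j hj j' hj' hne h1 h2 h3 h4
      rcases hd44 j j' (by simpa [hT4] using hj) (by simpa [hT4] using hj') hne with
        h | h | h | h
      · exact Or.inl h
      · exact Or.inr h
      · exfalso; linarith
      · exfalso; linarith
    have hS1card : (S1.card : ℝ) * (1/4-30*δ) ≤ 1 := by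
      have hsum := sum_len_le_one S1 X (fun _ => 1/4-30*δ)
        (fun i _ => by linarith)
        (fun i hi => hX0 i)
        (fun i hi => hX4 i (by
          have : i ∈ T4 := Finset.mem_of_mem_filter i (by rw [← hS1] at *; exact hi)
          simpa [hT4] using this))
        (fun i hi j hj hne => by
          rw [hS1] at hi hj
          simp only [Finset.mem_filter] at hi hj
          exact hover (1/3) i hi.1 j hj.1 hne hi.2
            (by have := hY0 i; linarith) hj.2 (by have := hY0 j; linarith))
      rw [Finset.sum_const, nsmul_eq_mul] at hsum
      exact hsum
    have hS2card : (S2.card : ℝ) * (1/4-30*δ) ≤ 1 := by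
      have hsum := sum_len_le_one S2 X (fun _ => 1/4-30*δ)
        (fun i _ => by linarith)
        (fun i hi => hX0 i)
        (fun i hi => hX4 i (by
          have : i ∈ T4 := Finset.mem_of_mem_filter i (by rw [← hS2] at *; exact hi)
          simpa [hT4] using this))
        (fun i hi j hj hne => by
          rw [hS2] at hi hj
          simp only [Finset.mem_filter, not_lt] at hi hj
          have hi4 : ¬ (i:ℕ) < a := by simpa [hT4] using hi.1
          have hj4 : ¬ (j:ℕ) < a := by simpa [hT4] using hj.1
          exact hover (2/3) i hi.1 j hj.1 hne
            (by have := hY4 i hi4; linarith) (by linarith)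
            (by have := hY4 j hj4; linarith) (by linarith))
      rw [Finset.sum_const, nsmul_eq_mul] at hsum
      exact hsum
    have h1 : S1.card ≤ 4 := by
      by_contra hcon
      push_neg at hcon
      have : (5:ℝ) ≤ (S1.card:ℕ) := by exact_mod_cast hcon
      nlinarith
    have h2 : S2.card ≤ 4 := by
      by_contra hcon
      push_neg at hcon
      have : (5:ℝ) ≤ (S2.card:ℕ) := by exact_mod_cast hcon
      nlinarith
    omega

set_option maxHeartbeats 2000000 in
lemma construct {δ ε : ℝ} (hδ : 0 < δ) (hδ' : δ < 1/10000) (hε : 0 < ε) (hε' : ε < 1/10000) :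
    ∃ pos : Fin (4 + 6) → ℝ × ℝ,
      RPack (fun i : Fin (4 + 6) => if (i : ℕ) < 4 then 1/2 + 200*δ else 1/4 - 30*δ)
        (fun i : Fin (4 + 6) => if (i : ℕ) < 4 then 1/6 - 2*ε else 1/3 + ε) pos := by
  refine ⟨![(1/4-30*δ, 1/3+ε), (1/4-30*δ, 1/2-ε), (1/4-170*δ, 2/3+2*ε), (1/4-170*δ, 5/6),
    (0, 0), (1/4-30*δ, 0), (1/2-60*δ, 0), (3/4-90*δ, 0), (0, 1/3+ε), (3/4+30*δ, 2/3-ε)], ?_, ?_⟩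
  · intro i
    fin_cases i <;> refine ⟨?_, ?_, ?_, ?_⟩ <;> norm_num <;> linarith
  · intro i j hne
    fin_cases i <;> fin_cases j <;>
      first
        | exact absurd rfl hne
        | (norm_num <;>
           first
            | linarith
            | (left; linarith)
            | (right; linarith)
            | (right; left; linarith)
            | (right; right; linarith)
            | (right; right; left; linarith)
            | (right; right; right; linarith))


lemma weight_bound {δ ε : ℝ} (hδ : 0 < δ) (hδ' : δ < 1/10000) (hε : 0 < ε) (hε' : ε < 1/10000)
    (a b : ℕ) (pos : Fin (a + b) → ℝ × ℝ)
    (hp : RPack (fun i : Fin (a + b) => if (i : ℕ) < a then 1/2 + 200*δ else 1/4 - 30*δ)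
          (fun i : Fin (a + b) => if (i : ℕ) < a then 1/6 - 2*ε else 1/3 + ε) pos) :
    ((96 : ℝ) * a + 72 * b) / 413 ≤ 816 / 413 := by
  obtain ⟨ha, hb⟩ := counts hδ hδ' hε hε' hp
  have hm := master hδ hδ' hε hε' hp
  have hbr : (b:ℝ) ≤ 8 := by exact_mod_cast hb
  have hpos : (0:ℝ) < (1/3+ε)*(1/4-30*δ) := by nlinarith
  have key : (96 : ℝ) * a + 72 * b ≤ 816 := by
    interval_cases a
    · norm_num; linarith
    · push_cast at hm ⊢; linarith
    · push_cast at hm ⊢; linarith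
    · -- a = 3 : b ≤ 7
      have hb7 : (b:ℝ) ≤ 7 := by
        by_contra hc
        push_neg at hc
        have h8 : (8:ℝ) ≤ (b:ℕ) := by
          have : 7 < b := by exact_mod_cast hc
          exact_mod_cast this
        have h8P := mul_le_mul_of_nonneg_right h8 hpos.le
        push_cast at hm
        nlinarith [mul_pos hδ hε]
      push_cast; linarith
    · -- a = 4 : b ≤ 6
      have hb6 : (b:ℝ) ≤ 6 := by
        by_contra hc
        push_neg at hc
        have h7 : (7:ℝ) ≤ (b:ℕ) := by
          have : 6 < b := by exact_mod_cast hc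
          exact_mod_cast this
        have h7P := mul_le_mul_of_nonneg_right h7 hpos.le
        push_cast at hm
        nlinarith [mul_pos hδ hε]
      push_cast; linarith
    · -- a = 5 : b ≤ 4
      have hb4 : (b:ℝ) ≤ 4 := by
        by_contra hc
        push_neg at hc
        have h5 : (5:ℝ) ≤ (b:ℕ) := by
          have : 4 < b := by exact_mod_cast hc
          exact_mod_cast this
        have h5P := mul_le_mul_of_nonneg_right h5 hpos.le
        push_cast at hm
        nlinarith [mul_pos hδ hε]
      push_cast; linarith
    · -- a = 6 : b ≤ 3
      have hb3 : (b:ℝ) ≤ 3 := by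
        by_contra hc
        push_neg at hc
        have h4 : (4:ℝ) ≤ (b:ℕ) := by
          have : 3 < b := by exact_mod_cast hc
          exact_mod_cast this
        have h4P := mul_le_mul_of_nonneg_right h4 hpos.le
        push_cast at hm
        nlinarith [mul_pos hδ hε]
      push_cast; linarith
  linarith

/-- With weights λ₃ = 96/413, λ₄ = 72/413, the maximum weight of a packing of
type-3 (width 1/2+200δ, height 1/6−2ε) and type-4 (width 1/4−30δ, height 1/3+ε)
rectangles is 816/413, attained by (4 type-3, 6 type-4). -/
theorem stmt10 :
    ∃ δ₀ > (0 : ℝ), ∃ ε₀ > (0 : ℝ), ∀ δ ε : ℝ, 0 < δ → δ < δ₀ → 0 < ε → ε < ε₀ →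
      (∀ a b : ℕ, ∀ pos : Fin (a + b) → ℝ × ℝ,
        RPack (fun i : Fin (a + b) => if (i : ℕ) < a then 1/2 + 200*δ else 1/4 - 30*δ)
          (fun i : Fin (a + b) => if (i : ℕ) < a then 1/6 - 2*ε else 1/3 + ε) pos →
        ((96 : ℝ) * a + 72 * b) / 413 ≤ 816 / 413) ∧
      (∃ pos : Fin (4 + 6) → ℝ × ℝ,
        RPack (fun i : Fin (4 + 6) => if (i : ℕ) < 4 then 1/2 + 200*δ else 1/4 - 30*δ)
          (fun i : Fin (4 + 6) => if (i : ℕ) < 4 then 1/6 - 2*ε else 1/3 + ε) pos) := by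
  refine ⟨1/10000, by norm_num, 1/10000, by norm_num, fun δ ε hδ hδ' hε hε' => ⟨?_, ?_⟩⟩
  · intro a b pos hp
    exact weight_bound hδ hδ' hε hε' a b pos hp
  · exact construct hδ hδ' hε hε'
end

section
/- Fix d ≥ 2 and parameters 1/3 = y_0 < y_1 < ⋯ < y_h < y_{h+1} = 1/2 and m_1,…,m_h ≥ 1. Suppose R satisfies, for all j ∈ {1,…,h}: (i) R ≥ 2 + (1 − 1/m_j)(1 − 1/2^d) − 1/2^d − (2^d − 1)y_{h−j}^d; (ii) R ≥ 2 + 1/m_j + (1 − 1/m_j)(1 − 1/2^d) − (1 − y_{h−j+1})^d − (2^d − 1)y_{h−j}^d; and (iii) R ≥ 3 − 1/2^{d−1} − (2^d − 1)y_h^d. Then R ≥ 3 − 2(2^d − 1)/3^d − (2^d + 1)/4^d. -/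
/-- Combined lower bound for Harmonic-type hypercube packing algorithms: any R
satisfying the three families of inequalities (for parameters y_j, m_j) is at
least 3 − 2(2^d−1)/3^d − (2^d+1)/4^d. -/
theorem stmt12 (d h : ℕ) (hd : 2 ≤ d) (hh : 1 ≤ h)
    (y : ℕ → ℝ) (m : ℕ → ℝ) (R : ℝ)
    (hy0 : y 0 = 1/3) (hyh1 : y (h + 1) = 1/2)
    (hymono : ∀ j ≤ h, y j < y (j + 1))
    (hm : ∀ j, 1 ≤ j → j ≤ h → 1 ≤ m j)
    (hineq1 : ∀ j, 1 ≤ j → j ≤ h →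
      R ≥ 2 + (1 - 1 / m j) * (1 - 1 / 2 ^ d) - 1 / 2 ^ d -
        (2 ^ d - 1) * (y (h - j)) ^ d)
    (hineq2 : ∀ j, 1 ≤ j → j ≤ h →
      R ≥ 2 + 1 / m j + (1 - 1 / m j) * (1 - 1 / 2 ^ d) -
        (1 - y (h - j + 1)) ^ d - (2 ^ d - 1) * (y (h - j)) ^ d)
    (hineq3 : R ≥ 3 - 1 / 2 ^ (d - 1) - (2 ^ d - 1) * (y h) ^ d) :
    R ≥ 3 - 2 * (2 ^ d - 1) / 3 ^ d - (2 ^ d + 1) / 4 ^ d := by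
  have H1 := hineq1 h hh (le_refl h)
  have H2 := hineq2 h hh (le_refl h)
  simp only [Nat.sub_self, Nat.zero_add, hy0] at H1 H2
  have hy1_lb : (1:ℝ)/3 < y 1 := by
    have := hymono 0 (by omega); rwa [hy0] at this
  have hy1_ub : y 1 ≤ 1/2 := by
    have key : ∀ k, k ≤ h → y 1 ≤ y (k+1) := by
      intro k hk
      induction k with
      | zero => exact le_refl _
      | succ n ih =>
        have h1 := ih (by omega)
        have h2 := hymono (n+1) (by omega)
        linarith
    have := key h (le_refl h)
    rwa [hyh1] at this
  set P : ℝ := 2 ^ d with hPdef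
  set T : ℝ := 3 ^ d with hTdef
  have hP4 : (4:ℝ) ≤ P := by
    calc (4:ℝ) = 2 ^ 2 := by norm_num
    _ ≤ 2 ^ d := pow_le_pow_right₀ one_le_two hd
  have hT : (0:ℝ) < T := by positivity
  have hP : (0:ℝ) < P := by positivity
  set E : ℝ := (1 - y 1) ^ d with hEdef
  have hE0 : (0:ℝ) ≤ E := pow_nonneg (by linarith) d
  have hET : E * T ≤ P := by
    have h1 : E ≤ (2/3:ℝ)^d := pow_le_pow_left₀ (by linarith) (by linarith) d
    have h2 : (2/3:ℝ)^d = P / T := by rw [hPdef, hTdef, div_pow]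
    rw [h2] at h1
    calc E * T ≤ (P / T) * T := mul_le_mul_of_nonneg_right h1 hT.le
    _ = P := by field_simp
  have h4P : (4:ℝ)^d = P^2 := by
    rw [hPdef, ← pow_mul, mul_comm, pow_mul]; norm_num
  have h13 : ((1:ℝ)/3)^d = 1/T := by rw [hTdef, div_pow, one_pow]
  rw [h13] at H1 H2
  rw [h4P]
  set a : ℝ := 1 / m h with hadef
  have hPne : P ≠ 0 := ne_of_gt hP
  have hTne : T ≠ 0 := ne_of_gt hT
  have hEPt : E * (1 - 1/P) ≤ (P - 1) * (1/T) := by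
    have hnn : (0:ℝ) ≤ (P-1)/(P*T) := div_nonneg (by linarith) (by positivity)
    calc E * (1 - 1/P) = E * T * ((P-1)/(P*T)) := by field_simp
    _ ≤ P * ((P-1)/(P*T)) := mul_le_mul_of_nonneg_right hET hnn
    _ = (P-1) * (1/T) := by field_simp
  have e3 : (P+1)/P^2 = 1/P + 1/P * (1/P) := by
    rw [div_eq_iff (by positivity : (P:ℝ)^2 ≠ 0)]; field_simp
  have huP1 : 1/P ≤ 1/4 := by
    apply one_div_le_one_div_of_le <;> linarith
  have huP : (0:ℝ) < 1/P := by positivity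
  by_cases hcase : a ≤ E - 1/P
  · -- use H1
    have key : a * (1 - 1/P) ≤ (E - 1/P) * (1 - 1/P) :=
      mul_le_mul_of_nonneg_right hcase (by linarith)
    have e1 : (E - 1/P) * (1 - 1/P) = E * (1 - 1/P) - 1/P + 1/P * (1/P) := by
      field_simp; ring
    have e0 : (1 - a) * (1 - 1/P) = (1 - 1/P) - a * (1 - 1/P) := by ring
    have e2 : 2 * (P-1)/T = 2 * ((P-1) * (1/T)) := by ring
    linarith [H1, key, hEPt]
  · push_neg at hcase
    have key2 : (E - 1/P) * (1/P) ≤ a * (1/P) :=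
      mul_le_mul_of_nonneg_right hcase.le huP.le
    have e1 : (E - 1/P) * (1/P) = E * (1/P) - 1/P * (1/P) := by ring
    have e4 : E * (1 - 1/P) = E - E * (1/P) := by ring
    have e2 : 2 * (P-1)/T = 2 * ((P-1) * (1/T)) := by ring
    linarith [H2, key2, hEPt]
end

section
/- For d = 2 and α = (197 − √36541)/27, the two functions f(α) = (213 − 2α)/(9(12 − α)) and g(α) = (26 − 9α)/12 are equal, and their common value exceeds 2.0043. Moreover f is strictly increasing and g is strictly decreasing on [0,1], so min_{α∈[0,1]} max(f(α), g(α)) = f(α*) = g(α*) with α* = (197 − √36541)/27 ≈ 0.2164. -/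
/-- The class-B₁ lower bound: at α* = (197 − √36541)/27 the two bounds
f(α) = (213 − 2α)/(9(12 − α)) and g(α) = (26 − 9α)/12 coincide, exceed 2.0043,
f is strictly increasing and g strictly decreasing on [0,1], and the min-max
over [0,1] is attained at α*. -/
theorem stmt14 :
    let f : ℝ → ℝ := fun a => (213 - 2 * a) / (9 * (12 - a))
    let g : ℝ → ℝ := fun a => (26 - 9 * a) / 12
    let α : ℝ := (197 - Real.sqrt 36541) / 27
    f α = g α ∧ f α > 2.0043 ∧
    StrictMonoOn f (Set.Icc 0 1) ∧ StrictAntiOn g (Set.Icc 0 1) ∧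
    α ∈ Set.Icc (0 : ℝ) 1 ∧
    (∀ a ∈ Set.Icc (0 : ℝ) 1, f α ≤ max (f a) (g a)) := by
  intro f g α
  have hsq : Real.sqrt 36541 ^ 2 = 36541 := Real.sq_sqrt (by norm_num)
  have hsnn : (0:ℝ) ≤ Real.sqrt 36541 := Real.sqrt_nonneg _
  have hs1 : (191.155 : ℝ) < Real.sqrt 36541 := by nlinarith
  have hs2 : Real.sqrt 36541 < 192 := by nlinarith
  have hα0 : (0:ℝ) ≤ α := by unfold α; nlinarith
  have hα1 : α ≤ 1 := by unfold α; nlinarith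
  have hmono : StrictMonoOn f (Set.Icc 0 1) := by
    intro a ha b hb hab
    have ha1 := ha.2
    have hb1 := hb.2
    have hda : (0:ℝ) < 9 * (12 - a) := by linarith
    have hdb : (0:ℝ) < 9 * (12 - b) := by linarith
    show (213 - 2 * a) / (9 * (12 - a)) < (213 - 2 * b) / (9 * (12 - b))
    rw [div_lt_div_iff₀ hda hdb]
    nlinarith
  have hfg : f α = g α := by
    show (213 - 2 * α) / (9 * (12 - α)) = (26 - 9 * α) / 12
    have hd : (9 * (12 - α)) ≠ 0 := by nlinarith
    rw [div_eq_div_iff hd (by norm_num)]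
    have : 27 * α ^ 2 - 394 * α + 84 = 0 := by
      unfold α; field_simp; nlinarith
    nlinarith
  have hgα : g α = (Real.sqrt 36541 - 119) / 36 := by
    unfold g α; ring
  refine ⟨hfg, ?_, hmono, ?_, ⟨hα0, hα1⟩, ?_⟩
  · rw [hfg, hgα]; norm_num; linarith
  · intro a _ b _ hab
    show (26 - 9 * b) / 12 < (26 - 9 * a) / 12
    linarith
  · intro a ha
    rcases le_or_gt α a with h | h
    · rcases eq_or_lt_of_le h with h' | h'
      · rw [h']; exact le_max_left _ _
      · exact le_trans (le_of_lt (hmono ⟨hα0, hα1⟩ ha h')) (le_max_left _ _)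
    · refine le_trans ?_ (le_max_right _ _)
      rw [hfg]
      show (26 - 9 * α) / 12 ≤ (26 - 9 * a) / 12
      have := ha.1
      linarith
end

section
/- For α* = (529 − √274441)/54, the functions f(α) = (85 + 79α)/(9(5 − α)) and g(α) = (26 − 9α)/12 satisfy f(α*) = g(α*), f is strictly increasing and g strictly decreasing on [0,1], and the common value f(α*) = g(α*) is strictly greater than 2.0954. -/
/-- The class-B₂ lower bound: at α* = (529 − √274441)/54 the two bounds
f(α) = (85 + 79α)/(9(5 − α)) and g(α) = (26 − 9α)/12 coincide, f is strictly
increasing and g strictly decreasing on [0,1], and the common value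
exceeds 2.0954. -/
theorem stmt15 :
    let f : ℝ → ℝ := fun a => (85 + 79 * a) / (9 * (5 - a))
    let g : ℝ → ℝ := fun a => (26 - 9 * a) / 12
    let α : ℝ := (529 - Real.sqrt 274441) / 54
    f α = g α ∧
    StrictMonoOn f (Set.Icc 0 1) ∧ StrictAntiOn g (Set.Icc 0 1) ∧
    f α > 2.0954 := by
  intro f g α
  have hs2 : Real.sqrt 274441 ^ 2 = 274441 := by
    rw [sq]; exact Real.mul_self_sqrt (by norm_num)
  have hs_lb : (523.866 : ℝ) < Real.sqrt 274441 := by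
    nlinarith [Real.sqrt_nonneg (274441 : ℝ)]
  have hs_ub : Real.sqrt 274441 < 523.8716 := by
    nlinarith [Real.sqrt_nonneg (274441 : ℝ)]
  have hα_pos : (0 : ℝ) < α := by
    show (0 : ℝ) < (529 - Real.sqrt 274441) / 54
    nlinarith
  have hα_ub : α < 0.09507 := by
    show (529 - Real.sqrt 274441) / 54 < 0.09507
    nlinarith
  have hα_lb : (0.09497 : ℝ) < α := by
    show (0.09497 : ℝ) < (529 - Real.sqrt 274441) / 54
    nlinarith
  have h5 : (9 : ℝ) * (5 - α) ≠ 0 := by nlinarith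
  refine ⟨?_, ?_, ?_, ?_⟩
  · show (85 + 79 * α) / (9 * (5 - α)) = (26 - 9 * α) / 12
    rw [div_eq_div_iff h5 (by norm_num)]
    have : 27 * α ^ 2 - 529 * α + 50 = 0 := by
      show 27 * ((529 - Real.sqrt 274441) / 54) ^ 2 -
        529 * ((529 - Real.sqrt 274441) / 54) + 50 = 0
      nlinarith
    nlinarith
  · intro a ha b hb hab
    have h1 : (0 : ℝ) < 9 * (5 - a) := by nlinarith [ha.2]
    have h2 : (0 : ℝ) < 9 * (5 - b) := by nlinarith [hb.2]
    show (85 + 79 * a) / (9 * (5 - a)) < (85 + 79 * b) / (9 * (5 - b))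
    rw [div_lt_div_iff₀ h1 h2]
    nlinarith [ha.1, hb.1]
  · intro a _ b _ hab
    show (26 - 9 * b) / 12 < (26 - 9 * a) / 12
    linarith
  · show (85 + 79 * α) / (9 * (5 - α)) > 2.0954
    rw [gt_iff_lt, lt_div_iff₀ (by nlinarith)]
    nlinarith
end
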